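/- arXiv:1902.00839 — 4 statements merged into one kernel-verified Lean document; each statement's English description precedes it below -/
import Mathlib

section
/- Lower bound for the commutator: let p ∈ (1,∞). Let 𝔄 be a complex-valued function such that 𝔄/b is real-valued and 𝔄/b ∈ L^1_loc(ℝ). If the commutator [𝔄/b, C_Γ] is bounded on L^p(ℝ), then 𝔄 ∈ BMO_b(ℝ) and ‖𝔄‖_{BMO_b(ℝ)} ≤ C ‖[𝔄/b, C_Γ]‖_{L^p(ℝ)→L^p(ℝ)}, with C independent of 𝔄. -/
open MeasureTheory Filter Set
open scoped ENNReal Topology NNReal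

noncomputable section

/-- The accretive function `b(x) = 1 + i A'(x)`. -/
def bFun (A' : ℝ → ℝ) : ℝ → ℂ := fun x => 1 + Complex.I * (A' x : ℂ)

/-- The kernel of the Cauchy integral `C_Γ` associated with the Lipschitz curve
`Γ = {x + iA(x) : x ∈ ℝ}`. -/
def cauchyKer (A A' : ℝ → ℝ) (x y : ℝ) : ℂ :=
  ((Real.pi : ℂ) * Complex.I)⁻¹ *
    ((1 + Complex.I * (A' y : ℂ)) /
      ((y : ℂ) - (x : ℂ) + Complex.I * ((A y : ℂ) - (A x : ℂ))))

/-- The kernel of the related Cauchy operator `C̃_Γ`. -/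
def relKer (A : ℝ → ℝ) (x y : ℝ) : ℂ :=
  ((Real.pi : ℂ) * Complex.I)⁻¹ *
    (1 / ((y : ℂ) - (x : ℂ) + Complex.I * ((A y : ℂ) - (A x : ℂ))))

/-- `IsPV K f x z` : `z` is the principal value `p.v. ∫ K(x,y) f(y) dy`. -/
def IsPV (K : ℝ → ℝ → ℂ) (f : ℝ → ℂ) (x : ℝ) (z : ℂ) : Prop :=
  Tendsto (fun ε : ℝ => ∫ y in {y : ℝ | ε < |y - x|}, K x y * f y)
    (𝓝[>] (0 : ℝ)) (𝓝 z)

/-- `T` is (the `L^p`-extension of) the principal value singular integral operator with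
kernel `K`: for every `f ∈ L^p(ℝ)`, `1 < p < ∞`, at a.e. `x` the value `T f x` is the
principal value of `∫ K(x,y) f(y) dy`. -/
def IsPVOp (K : ℝ → ℝ → ℂ) (T : (ℝ → ℂ) → ℝ → ℂ) : Prop :=
  ∀ p : ℝ≥0∞, 1 < p → p < ⊤ → ∀ f : ℝ → ℂ, MemLp f p volume →
    ∀ᵐ x ∂volume, IsPV K f x (T f x)

/-- `T` is bounded on `L^p(ℝ)` with constant `C`. -/
def BddOnLp (p : ℝ≥0∞) (T : (ℝ → ℂ) → ℝ → ℂ) (C : ℝ) : Prop :=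
  ∀ f : ℝ → ℂ, MemLp f p volume →
    MemLp (T f) p volume ∧
      eLpNorm (T f) p volume ≤ ENNReal.ofReal C * eLpNorm f p volume

/-- `T` is a compact operator on `L^p(ℝ)`: every `L^p`-bounded sequence has a subsequence
whose image under `T` is Cauchy in the `L^p` (semi)metric; equivalently, `T` maps bounded
sets to precompact (totally bounded) sets. -/
def CompactOnLp (p : ℝ≥0∞) (T : (ℝ → ℂ) → ℝ → ℂ) : Prop :=
  ∀ (f : ℕ → ℝ → ℂ) (C : ℝ≥0∞), (∀ n, MemLp (f n) p volume) →
    (∀ n, eLpNorm (f n) p volume ≤ C) →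
    ∃ φ : ℕ → ℕ, StrictMono φ ∧
      ∀ ε : ℝ≥0∞, 0 < ε → ∃ N : ℕ, ∀ m ≥ N, ∀ n ≥ N,
        eLpNorm (fun x => T (f (φ m)) x - T (f (φ n)) x) p volume < ε

/-- The bilinear `L²`-pairing `⟨u, v⟩ = ∫ u v`. -/
def pairing (u v : ℝ → ℂ) : ℂ := ∫ x, u x * v x

/-- `S` is the adjoint of `T` with respect to the bilinear pairing `⟨u,v⟩ = ∫ u v`. -/
def IsBilinAdjoint (T S : (ℝ → ℂ) → ℝ → ℂ) : Prop :=
  ∀ f g : ℝ → ℂ, MemLp f 2 volume → MemLp g 2 volume →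
    pairing (T f) g = pairing f (S g)

/-- The bilinear form `Π_b(g,h) = b⁻¹ (g • T h − h • T* g)`. -/
def PiB (b : ℝ → ℂ) (T Tstar : (ℝ → ℂ) → ℝ → ℂ) (g h : ℝ → ℂ) : ℝ → ℂ :=
  fun x => (b x)⁻¹ * (g x * T h x - h x * Tstar g x)

/-- The commutator `[a, T] f = a • T f − T (a f)`. -/
def commutatorFn (a : ℝ → ℂ) (T : (ℝ → ℂ) → ℝ → ℂ) (f : ℝ → ℂ) : ℝ → ℂ :=
  fun x => a x * T f x - T (fun y => a y * f y) x

/-- The mean oscillation of `f` over the interval `(a, c)`. -/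
def meanOsc (f : ℝ → ℂ) (a c : ℝ) : ℝ :=
  (c - a)⁻¹ * ∫ x in a..c, ‖f x - (c - a)⁻¹ • ∫ y in a..c, f y‖

/-- The set of all mean oscillations of `f` over bounded intervals. -/
def bmoSet (f : ℝ → ℂ) : Set ℝ := {t | ∃ a c : ℝ, a < c ∧ t = meanOsc f a c}

/-- `f ∈ BMO(ℝ)`. -/
def MemBMO (f : ℝ → ℂ) : Prop :=
  LocallyIntegrable f volume ∧ BddAbove (bmoSet f)

/-- The `BMO` seminorm of `f`. -/
def bmoNorm (f : ℝ → ℂ) : ℝ := sSup (bmoSet f)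

/-- `f ∈ VMO(ℝ)`: `f ∈ BMO(ℝ)` and the mean oscillations vanish uniformly over small
intervals, over large intervals, and over intervals far from the origin. -/
def MemVMO (f : ℝ → ℂ) : Prop :=
  MemBMO f ∧
    (∀ ε : ℝ, 0 < ε → ∃ δ : ℝ, 0 < δ ∧
      ∀ a c : ℝ, a < c → c - a < δ → meanOsc f a c < ε) ∧
    (∀ ε : ℝ, 0 < ε → ∃ R : ℝ, 0 < R ∧
      ∀ a c : ℝ, a < c → R < c - a → meanOsc f a c < ε) ∧
    (∀ ε : ℝ, 0 < ε → ∃ R : ℝ, 0 < R ∧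
      ∀ a c : ℝ, a < c → (c ≤ -R ∨ R ≤ a) → meanOsc f a c < ε)

/-- `𝔄 ∈ BMO_b(ℝ)` iff `𝔄 / b ∈ BMO(ℝ)`. -/
def MemBMOb (b f : ℝ → ℂ) : Prop := MemBMO (fun x => f x / b x)

/-- `‖𝔄‖_{BMO_b} := ‖𝔄 / b‖_{BMO}`. -/
def bmobNorm (b f : ℝ → ℂ) : ℝ := bmoNorm (fun x => f x / b x)

/-- `𝔄 ∈ VMO_b(ℝ)` iff `𝔄 / b ∈ VMO(ℝ)`. -/
def MemVMOb (b f : ℝ → ℂ) : Prop := MemVMO (fun x => f x / b x)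

/-- An `H¹_b(ℝ)` `L^∞`-atom: supported in an interval `I = I(x0, r)`, with
`‖a‖_∞ ≤ 1/|I|` and the cancellation `∫ a b = 0`. Taking `b ≡ 1` gives classical
`H¹(ℝ)` `L^∞`-atoms. -/
def IsAtomB (b a : ℝ → ℂ) : Prop :=
  ∃ x0 r : ℝ, 0 < r ∧ (∀ x, x ∉ Metric.ball x0 r → a x = 0) ∧
    (∀ x, ‖a x‖ ≤ (2 * r)⁻¹) ∧
    Integrable (fun x => a x * b x) volume ∧ (∫ x, a x * b x) = 0

/-- The `ℓ¹`-sums of coefficients of atomic decompositions of `f` into `H¹_b` atoms. -/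
def h1bReps (b f : ℝ → ℂ) : Set ℝ :=
  {t | ∃ (lam : ℕ → ℂ) (a : ℕ → ℝ → ℂ),
        (∀ j, IsAtomB b (a j)) ∧ Summable (fun j => ‖lam j‖) ∧
        (∀ᵐ x ∂volume, HasSum (fun j => lam j * a j x) (f x)) ∧
        t = ∑' j, ‖lam j‖}

/-- `f ∈ H¹_b(ℝ)`: `f` is integrable and admits an atomic decomposition. -/
def MemH1b (b f : ℝ → ℂ) : Prop := Integrable f volume ∧ (h1bReps b f).Nonempty

/-- The atomic `H¹_b(ℝ)` norm (with value `⊤` when `f ∉ H¹_b(ℝ)`). -/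
def h1bNorm (b f : ℝ → ℂ) : ℝ≥0∞ := ⨅ t ∈ h1bReps b f, ENNReal.ofReal t

end
lemma exists_median (ψ : ℝ → ℝ) (hψ : Measurable ψ) (s : Set ℝ) (hs : MeasurableSet s)
    (R : ℝ) (hR : 0 < R) (hsR : volume s = ENNReal.ofReal R) :
    ∃ m : ℝ, ENNReal.ofReal (R / 2) ≤ volume {y | y ∈ s ∧ ψ y ≤ m} ∧
      ENNReal.ofReal (R / 2) ≤ volume {y | y ∈ s ∧ m ≤ ψ y} := by
  set F : ℝ → ℝ≥0∞ := fun t => volume {y | y ∈ s ∧ ψ y ≤ t} with hF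
  have hFmeas : ∀ t : ℝ, MeasurableSet {y | y ∈ s ∧ ψ y ≤ t} := fun t =>
    hs.inter (hψ measurableSet_Iic)
  have hFmono : Monotone F := fun t t' htt' =>
    measure_mono (fun y hy => ⟨hy.1, hy.2.trans htt'⟩)
  have hfin : ∀ t, F t ≠ ∞ := fun t => by
    refine ne_top_of_le_ne_top ?_ (measure_mono (fun y hy => hy.1) : F t ≤ volume s)
    rw [hsR]; exact ENNReal.ofReal_ne_top
  have hhalf_lt : ENNReal.ofReal (R / 2) < ENNReal.ofReal R := by
    apply ENNReal.ofReal_lt_ofReal_iff_of_nonneg (by positivity) |>.2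
    linarith
  set S : Set ℝ := {t | ENNReal.ofReal (R / 2) ≤ F t} with hS
  -- S is nonempty
  have hne : S.Nonempty := by
    have hum : Monotone (fun n : ℕ => {y | y ∈ s ∧ ψ y ≤ (n : ℝ)}) := by
      intro n m hnm y hy
      exact ⟨hy.1, hy.2.trans (by exact_mod_cast hnm)⟩
    have hU : (⋃ n : ℕ, {y | y ∈ s ∧ ψ y ≤ (n : ℝ)}) = s := by
      apply Subset.antisymm
      · exact iUnion_subset fun n y hy => hy.1
      · intro y hy
        obtain ⟨n, hn⟩ := exists_nat_ge (ψ y)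
        exact mem_iUnion.2 ⟨n, hy, hn⟩
    have h1 := tendsto_measure_iUnion_atTop (μ := volume) hum
    rw [hU, hsR] at h1
    obtain ⟨n, hn⟩ := (h1.eventually_const_le hhalf_lt).exists
    exact ⟨(n : ℝ), hn⟩
  -- S is bounded below
  have hbdd : BddBelow S := by
    have ham : Antitone (fun n : ℕ => {y | y ∈ s ∧ ψ y ≤ -(n : ℝ)}) := by
      intro n m hnm y hy
      exact ⟨hy.1, hy.2.trans (by exact_mod_cast neg_le_neg (Nat.cast_le.2 hnm))⟩
    have hI : (⋂ n : ℕ, {y | y ∈ s ∧ ψ y ≤ -(n : ℝ)}) = ∅ := by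
      ext y; simp only [mem_iInter, mem_empty_iff_false, iff_false]
      intro h
      obtain ⟨n, hn⟩ := exists_nat_gt (-ψ y)
      have := (h n).2
      linarith
    have h1 := tendsto_measure_iInter_atTop (μ := volume)
      (s := fun n : ℕ => {y | y ∈ s ∧ ψ y ≤ -(n : ℝ)})
      (fun n => (hFmeas (-(n : ℝ))).nullMeasurableSet) ham ⟨0, hfin _⟩
    rw [hI, measure_empty] at h1
    have hpos : (0 : ℝ≥0∞) < ENNReal.ofReal (R / 2) := by
      rw [ENNReal.ofReal_pos]; linarith
    obtain ⟨n, hn⟩ := (h1.eventually_lt_const hpos).exists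
    refine ⟨-(n : ℝ), fun t ht => ?_⟩
    by_contra hlt
    push_neg at hlt
    exact absurd (hFmono hlt.le |>.trans_lt hn) (not_lt.2 ht)
  set m := sInf S with hm
  refine ⟨m, ?_, ?_⟩
  · -- {ψ ≤ m} = ⋂ k, {ψ ≤ m + 1/(k+1)}
    have hIeq : {y | y ∈ s ∧ ψ y ≤ m} = ⋂ k : ℕ, {y | y ∈ s ∧ ψ y ≤ m + 1 / (k + 1)} := by
      ext y
      simp only [mem_iInter, mem_setOf_eq]
      constructor
      · rintro ⟨hy, hle⟩ k
        have hpos : (0:ℝ) < 1 / ((k:ℝ) + 1) := by positivity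
        exact ⟨hy, by linarith⟩
      · intro h
        refine ⟨(h 0).1, le_of_forall_pos_le_add fun ε hε => ?_⟩
        obtain ⟨k, hk⟩ := exists_nat_one_div_lt hε
        exact (h k).2.trans (by linarith)
    have ham : Antitone (fun k : ℕ => {y | y ∈ s ∧ ψ y ≤ m + 1 / (k + 1)}) := by
      intro k l hkl y hy
      refine ⟨hy.1, hy.2.trans ?_⟩
      have h1 : (1 : ℝ) / (l + 1) ≤ 1 / (k + 1) := by
        apply one_div_le_one_div_of_le (by positivity)
        exact_mod_cast by exact_mod_cast add_le_add_left (Nat.cast_le.2 hkl) 1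
      linarith
    have h1 := tendsto_measure_iInter_atTop (μ := volume)
      (s := fun k : ℕ => {y | y ∈ s ∧ ψ y ≤ m + 1 / (k + 1)})
      (fun k => (hFmeas _).nullMeasurableSet) ham ⟨0, hfin _⟩
    rw [← hIeq] at h1
    refine ge_of_tendsto h1 (Eventually.of_forall fun k => ?_)
    have hmlt : m < m + 1 / ((k:ℝ) + 1) := by
      have : (0:ℝ) < 1 / ((k:ℝ) + 1) := by positivity
      linarith
    obtain ⟨t, htS, htlt⟩ := csInf_lt_iff hbdd hne |>.1 hmlt
    exact le_trans htS (hFmono htlt.le)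
  · -- {m ≤ ψ} = ⋂ k, {m - 1/(k+1) < ψ}
    have hIeq : {y | y ∈ s ∧ m ≤ ψ y} = ⋂ k : ℕ, {y | y ∈ s ∧ m - 1 / (k + 1) < ψ y} := by
      ext y
      simp only [mem_iInter, mem_setOf_eq]
      constructor
      · rintro ⟨hy, hle⟩ k
        refine ⟨hy, lt_of_lt_of_le ?_ hle⟩
        have : (0 : ℝ) < 1 / ((k:ℝ) + 1) := by positivity
        linarith
      · intro h
        refine ⟨(h 0).1, ?_⟩
        by_contra hlt
        push_neg at hlt
        obtain ⟨k, hk⟩ := exists_nat_one_div_lt (show (0:ℝ) < m - ψ y by linarith)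
        have := (h k).2
        linarith
    have ham : Antitone (fun k : ℕ => {y | y ∈ s ∧ m - 1 / (k + 1) < ψ y}) := by
      intro k l hkl y hy
      refine ⟨hy.1, lt_of_le_of_lt ?_ hy.2⟩
      have h1 : (1 : ℝ) / (l + 1) ≤ 1 / (k + 1) := by
        apply one_div_le_one_div_of_le (by positivity)
        exact_mod_cast add_le_add_left (Nat.cast_le.2 hkl) 1
      linarith
    have hmeas2 : ∀ t : ℝ, MeasurableSet {y | y ∈ s ∧ t < ψ y} := fun t =>
      hs.inter (hψ measurableSet_Ioi)
    have h1 := tendsto_measure_iInter_atTop (μ := volume)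
      (s := fun k : ℕ => {y | y ∈ s ∧ m - 1 / (k + 1) < ψ y})
      (fun k => (hmeas2 _).nullMeasurableSet)
      ham ⟨0, ne_top_of_le_ne_top (by rw [hsR]; exact ENNReal.ofReal_ne_top)
        (measure_mono fun y hy => hy.1)⟩
    rw [← hIeq] at h1
    refine ge_of_tendsto h1 (Eventually.of_forall fun k => ?_)
    show ENNReal.ofReal (R / 2) ≤ volume {y | y ∈ s ∧ m - 1 / ((k:ℝ) + 1) < ψ y}
    -- m - 1/(k+1) ∉ S, so F (m - 1/(k+1)) < R/2, so complement part ≥ R/2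
    set t := m - 1 / ((k : ℝ) + 1) with ht
    have htS : t ∉ S := by
      intro hmem
      have h3 := csInf_le hbdd hmem
      rw [← hm, ht] at h3
      have : (0:ℝ) < 1 / ((k:ℝ) + 1) := by positivity
      linarith
    have hFt : F t < ENNReal.ofReal (R / 2) := by
      rw [hS] at htS; simpa using not_le.1 htS
    have hsplit : F t + volume {y | y ∈ s ∧ t < ψ y} = ENNReal.ofReal R := by
      rw [← hsR, hF]
      rw [← measure_union ?_ (hmeas2 t)]
      · congr 1
        ext y
        simp only [mem_union, mem_setOf_eq]
        constructor
        · rintro (⟨h, _⟩ | ⟨h, _⟩) <;> exact h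
        · intro hy
          rcases le_or_gt (ψ y) t with h | h
          · exact Or.inl ⟨hy, h⟩
          · exact Or.inr ⟨hy, h⟩
      · rw [Set.disjoint_left]
        rintro y ⟨_, h1⟩ ⟨_, h2⟩
        exact absurd h1 (not_le.2 h2)
    have h2R : ENNReal.ofReal (R/2) + ENNReal.ofReal (R/2) = ENNReal.ofReal R := by
      rw [← ENNReal.ofReal_add (by positivity) (by positivity)]; ring_nf
    by_contra hcon
    push_neg at hcon
    have := ENNReal.add_lt_add_of_le_of_lt (hfin t) hFt.le hcon
    rw [hsplit, h2R] at this
    exact lt_irrefl _ this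
section Helpers

open Complex

lemma bFun_re (A' : ℝ → ℝ) (x : ℝ) : (bFun A' x).re = 1 := by
  simp [bFun]

lemma bFun_ne_zero (A' : ℝ → ℝ) (x : ℝ) : bFun A' x ≠ 0 := by
  intro h
  have := bFun_re A' x
  rw [h] at this
  simp at this

lemma one_le_norm_bFun (A' : ℝ → ℝ) (x : ℝ) : 1 ≤ ‖bFun A' x‖ := by
  have h := Complex.abs_re_le_norm (bFun A' x)
  rw [bFun_re] at h
  simpa using h

lemma measurable_bFun (A' : ℝ → ℝ) (hA' : Measurable A') : Measurable (bFun A') := by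
  unfold bFun
  exact measurable_const.add (measurable_const.mul (Complex.measurable_ofReal.comp hA'))

/-- `ζ x y`, the denominator of the Cauchy kernel. -/
def zeta (A : ℝ → ℝ) (x y : ℝ) : ℂ := (y : ℂ) - (x : ℂ) + Complex.I * ((A y : ℂ) - (A x : ℂ))

lemma zeta_re (A : ℝ → ℝ) (x y : ℝ) : (zeta A x y).re = y - x := by
  simp [zeta]

lemma zeta_im (A : ℝ → ℝ) (x y : ℝ) : (zeta A x y).im = A y - A x := by
  simp [zeta]

lemma zeta_ne_zero (A : ℝ → ℝ) {x y : ℝ} (hxy : x < y) : zeta A x y ≠ 0 := by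
  intro h
  have := zeta_re A x y
  rw [h] at this
  simp at this
  linarith

lemma norm_zeta_inv_le (A : ℝ → ℝ) {x y r : ℝ} (hr : 0 < r) (hxy : r ≤ y - x) :
    ‖(zeta A x y)⁻¹‖ ≤ r⁻¹ := by
  rw [norm_inv]
  have h1 : r ≤ ‖zeta A x y‖ := by
    have h := Complex.abs_re_le_norm (zeta A x y)
    rw [zeta_re] at h
    calc r ≤ y - x := hxy
    _ ≤ |y - x| := le_abs_self _
    _ ≤ _ := h
  exact inv_anti₀ hr h1

lemma zeta_inv_re_ge (A : ℝ → ℝ) (L : ℝ≥0) (hA : LipschitzWith L A) {x y r : ℝ}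
    (hr : 0 < r) (h1 : r ≤ y - x) (h3 : y - x ≤ 3 * r) :
    1 / (3 * (1 + (L : ℝ) ^ 2) * r) ≤ ((zeta A x y)⁻¹).re := by
  have hyx : 0 < y - x := lt_of_lt_of_le hr h1
  have hLip : |A y - A x| ≤ (L : ℝ) * (y - x) := by
    have := hA.dist_le_mul y x
    rw [Real.dist_eq, Real.dist_eq] at this
    calc |A y - A x| ≤ (L:ℝ) * |y - x| := this
    _ = (L:ℝ) * (y - x) := by rw [abs_of_pos hyx]
  have hnormSq : Complex.normSq (zeta A x y) ≤ (1 + (L:ℝ)^2) * (y - x)^2 := by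
    rw [Complex.normSq_apply, zeta_re, zeta_im]
    have h4 : (A y - A x)^2 ≤ ((L:ℝ) * (y - x))^2 := by
      rw [← _root_.sq_abs (A y - A x)]
      exact pow_le_pow_left₀ (abs_nonneg _) hLip 2
    nlinarith [sq_nonneg (y - x), sq_nonneg (L:ℝ)]
  rw [Complex.inv_re, zeta_re]
  have hL1 : (0:ℝ) < 1 + (L:ℝ)^2 := by positivity
  have hnsqpos : 0 < Complex.normSq (zeta A x y) := by
    rw [Complex.normSq_pos]
    exact zeta_ne_zero A (by linarith)
  rw [div_le_div_iff₀ (by positivity) hnsqpos]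
  nlinarith [hnormSq, mul_le_mul_of_nonneg_left h3 (le_of_lt (mul_pos hL1 hyx))]

end Helpers
section Helpers2

open MeasureTheory Filter Set
open scoped ENNReal Topology

lemma IsPV.eq_integral {K : ℝ → ℝ → ℂ} {f : ℝ → ℂ} {x : ℝ} {z : ℂ} {r : ℝ} (hr : 0 < r)
    (h : IsPV K f x z) (hf : ∀ y, |y - x| ≤ r → f y = 0)
    (_hint : Integrable (fun y => K x y * f y) volume) :
    z = ∫ y, K x y * f y := by
  refine tendsto_nhds_unique h (Tendsto.congr' ?_ tendsto_const_nhds)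
  filter_upwards [Ioo_mem_nhdsGT_of_mem (show (0:ℝ) ∈ Ico 0 r from ⟨le_refl _, hr⟩)] with ε hε
  refine (setIntegral_eq_integral_of_forall_compl_eq_zero fun y hy => ?_).symm
  simp only [mem_setOf_eq, not_lt] at hy
  rw [hf y (hy.trans hε.2.le), mul_zero]

lemma exists_trunc_measure (ψ : ℝ → ℂ) (T : Set ℝ) (R : ℝ) (hR : 0 < R)
    (h : ENNReal.ofReal (R / 2) ≤ volume T) :
    ∃ n : ℕ, ENNReal.ofReal (R / 4) ≤ volume (T ∩ {y | ‖ψ y‖ ≤ (n : ℝ)}) := by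
  have hmono : Monotone (fun n : ℕ => T ∩ {y | ‖ψ y‖ ≤ (n : ℝ)}) := by
    intro n m hnm y hy
    refine ⟨hy.1, ?_⟩
    have h2 : ‖ψ y‖ ≤ (n : ℝ) := hy.2
    exact h2.trans (Nat.cast_le.2 hnm)
  have hU : (⋃ n : ℕ, T ∩ {y | ‖ψ y‖ ≤ (n : ℝ)}) = T := by
    apply Subset.antisymm (iUnion_subset fun n y hy => hy.1)
    intro y hy
    obtain ⟨n, hn⟩ := exists_nat_ge ‖ψ y‖
    exact mem_iUnion.2 ⟨n, hy, hn⟩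
  have h1 := tendsto_measure_iUnion_atTop (μ := volume) hmono
  rw [hU] at h1
  have hlt : ENNReal.ofReal (R / 4) < volume T :=
    lt_of_lt_of_le (ENNReal.ofReal_lt_ofReal_iff_of_nonneg (by positivity) |>.2 (by linarith)) h
  obtain ⟨n, hn⟩ := (h1.eventually_const_le hlt).exists
  exact ⟨n, hn⟩

lemma abs_eq_maxes (t : ℝ) : |t| = max t 0 + max (-t) 0 := by
  rcases le_total t 0 with h | h
  · rw [abs_of_nonpos h, max_eq_right h, max_eq_left (by linarith), zero_add]
  · rw [abs_of_nonneg h, max_eq_left h, max_eq_right (by linarith), add_zero]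

end Helpers2
section Core

open MeasureTheory Filter Set
open scoped ENNReal Topology NNReal

lemma core_bound (A A' : ℝ → ℝ) (L : ℝ≥0) (hA : LipschitzWith L A) (hA'meas : Measurable A')
    (CΓ : (ℝ → ℂ) → ℝ → ℂ) (hCΓ : IsPVOp (cauchyKer A A') CΓ)
    (p : ℝ≥0∞) (hp1 : 1 < p) (hp2 : p < ⊤)
    (φ : ℝ → ℂ) (N : ℝ) (hN : 0 ≤ N)
    (him : ∀ x, (φ x).im = 0)
    (hloc : LocallyIntegrable φ volume)
    (hbdd : BddOnLp p (commutatorFn φ CΓ) N)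
    (a c m σ : ℝ) (hac : a < c) (hσ : |σ| = 1)
    (E : Set ℝ) (hE : MeasurableSet E)
    (hEJ : E ⊆ Ioc (c + (c - a)) (c + 2 * (c - a)))
    (n : ℕ) (hEbd : ∀ᵐ y ∂volume, y ∈ E → ‖φ y‖ ≤ (n : ℝ))
    (hEsign : ∀ᵐ y ∂volume, y ∈ E → σ * ((φ y).re - m) ≤ 0)
    (hEvol : ENNReal.ofReal ((c - a) / 4) ≤ volume E) :
    ∫ x in Ioc a c, max (σ * ((φ x).re - m)) 0 ≤
      12 * (1 + (L : ℝ) ^ 2) * Real.pi * (N * (c - a)) := by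
  set r : ℝ := c - a with hrdef
  have hr : 0 < r := by rw [hrdef]; linarith
  have hL2 : (0:ℝ) < 1 + (L:ℝ)^2 := by positivity
  set c₀ : ℂ := ((Real.pi : ℂ) * Complex.I)⁻¹ with hc₀def
  have hc₀norm : ‖c₀‖ = Real.pi⁻¹ := by
    rw [hc₀def, norm_inv, norm_mul]
    simp [abs_of_pos Real.pi_pos]
  have hφm : AEStronglyMeasurable φ volume := hloc.aestronglyMeasurable
  have hp0 : p ≠ 0 := by positivity
  have hpt : p ≠ ⊤ := hp2.ne
  have hq1 : 1 < p.toReal := by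
    rw [← ENNReal.toReal_one]
    exact ENNReal.toReal_strict_mono hpt hp1
  have hq0 : (0:ℝ) < 1 / p.toReal := by positivity
  -- the test function f
  set f : ℝ → ℂ := E.indicator (fun y => (bFun A' y)⁻¹) with hfdef
  have hfmeas : Measurable f := ((measurable_bFun A' hA'meas).inv).indicator hE
  have hvolE : volume E ≤ ENNReal.ofReal r := by
    refine le_trans (measure_mono hEJ) ?_
    rw [Real.volume_Ioc]
    exact ENNReal.ofReal_le_ofReal (by linarith)
  have hvolEne : volume E ≠ ⊤ := ne_top_of_le_ne_top ENNReal.ofReal_ne_top hvolE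
  have hf_eLp : eLpNorm f p volume ≤ ENNReal.ofReal r ^ (1 / p.toReal) := by
    have h1 : ∀ y, ‖f y‖ ≤ ‖E.indicator (fun _ => (1:ℝ)) y‖ := by
      intro y
      by_cases hy : y ∈ E
      · rw [hfdef, indicator_of_mem hy, indicator_of_mem hy, norm_inv]
        simp only [norm_one]
        exact inv_le_one_of_one_le₀ (one_le_norm_bFun A' y)
      · rw [hfdef, indicator_of_notMem hy, indicator_of_notMem hy]
        simp
    calc eLpNorm f p volume ≤ eLpNorm (E.indicator (fun _ => (1:ℝ))) p volume :=
          eLpNorm_mono h1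
      _ = ‖(1:ℝ)‖₊ * volume E ^ (1 / p.toReal) := eLpNorm_indicator_const hE hp0 hpt
      _ ≤ ENNReal.ofReal r ^ (1 / p.toReal) := by
          simp only [nnnorm_one, ENNReal.coe_one, one_mul]
          exact ENNReal.rpow_le_rpow hvolE hq0.le
  have hfLp : MemLp f p volume := by
    refine ⟨hfmeas.aestronglyMeasurable, lt_of_le_of_lt hf_eLp ?_⟩
    exact ENNReal.rpow_lt_top_of_nonneg hq0.le ENNReal.ofReal_ne_top
  -- φ * f is also in L^p
  have hφfLp : MemLp (fun y => φ y * f y) p volume := by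
    refine ⟨hφm.mul hfmeas.aestronglyMeasurable, ?_⟩
    have h1 : ∀ᵐ y ∂volume, ‖φ y * f y‖ ≤ ‖E.indicator (fun _ => (n:ℝ)) y‖ := by
      filter_upwards [hEbd] with y hy
      by_cases hyE : y ∈ E
      · rw [hfdef, indicator_of_mem hyE, indicator_of_mem hyE, norm_mul, norm_inv]
        rw [Real.norm_eq_abs, abs_of_nonneg (Nat.cast_nonneg n)]
        calc ‖φ y‖ * ‖bFun A' y‖⁻¹ ≤ (n:ℝ) * 1 := by
              refine mul_le_mul (hy hyE) (inv_le_one_of_one_le₀ (one_le_norm_bFun A' y))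
                (by positivity) (Nat.cast_nonneg n)
          _ = (n:ℝ) := mul_one _
      · rw [hfdef, indicator_of_notMem hyE, indicator_of_notMem hyE]
        simp
    calc eLpNorm (fun y => φ y * f y) p volume
        ≤ eLpNorm (E.indicator (fun _ => (n:ℝ))) p volume := eLpNorm_mono_ae h1
      _ = ‖(n:ℝ)‖₊ * volume E ^ (1 / p.toReal) := eLpNorm_indicator_const hE hp0 hpt
      _ < ⊤ := by
          apply ENNReal.mul_lt_top ENNReal.coe_lt_top
          exact lt_of_le_of_lt (ENNReal.rpow_le_rpow hvolE hq0.le)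
            (ENNReal.rpow_lt_top_of_nonneg hq0.le ENNReal.ofReal_ne_top)
  obtain ⟨hgLp, hgnorm⟩ := hbdd f hfLp
  set g : ℝ → ℂ := commutatorFn φ CΓ f with hgdef
  -- pointwise a.e. estimate on (a, c]
  have hptwise : ∀ᵐ x ∂volume, x ∈ Ioc a c →
      max (σ * ((φ x).re - m)) 0 ≤ 12 * (1 + (L:ℝ)^2) * Real.pi * ‖g x‖ := by
    filter_upwards [hCΓ p hp1 hp2 f hfLp, hCΓ p hp1 hp2 (fun y => φ y * f y) hφfLp]
      with x hx1 hx2 hxI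
    have hxa : a < x := hxI.1
    have hxc : x ≤ c := hxI.2
    have hyE : ∀ y ∈ E, r < y - x ∧ y - x ≤ 3 * r := by
      intro y hy
      obtain ⟨h1, h2⟩ := hEJ hy
      have hreq : r = c - a := hrdef
      exact ⟨by linarith, by linarith⟩
    have hfvan : ∀ y, |y - x| ≤ r → f y = 0 := by
      intro y hy
      refine indicator_of_notMem (fun hmem => ?_) _
      have h1 := (hyE y hmem).1
      have h2 := abs_le.1 hy
      linarith [h2.2]
    -- the function u y = ζ(x,y)⁻¹
    set u : ℝ → ℂ := fun y => (zeta A x y)⁻¹ with hudef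
    have humeas : Measurable u := by
      apply Measurable.inv
      unfold zeta
      exact ((Complex.measurable_ofReal.comp measurable_id).sub measurable_const).add
        (measurable_const.mul ((Complex.measurable_ofReal.comp
          (hA.continuous.measurable.comp measurable_id)).sub measurable_const))
    have hu_norm : ∀ y ∈ E, ‖u y‖ ≤ r⁻¹ := fun y hy =>
      norm_zeta_inv_le A hr (le_of_lt (hyE y hy).1)
    have hu_re : ∀ y ∈ E, 1 / (3 * (1 + (L:ℝ)^2) * r) ≤ (u y).re := fun y hy =>
      zeta_inv_re_ge A L hA hr (le_of_lt (hyE y hy).1) (hyE y hy).2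
    have hu_int : IntegrableOn u E volume := by
      refine Measure.integrableOn_of_bounded (M := r⁻¹) hvolEne humeas.aestronglyMeasurable ?_
      rw [ae_restrict_iff' hE]
      exact Eventually.of_forall hu_norm
    have hφu_int : IntegrableOn (fun y => φ y * u y) E volume := by
      refine Measure.integrableOn_of_bounded (M := (n:ℝ) * r⁻¹) hvolEne
        (hφm.mul humeas.aestronglyMeasurable) ?_
      filter_upwards [(ae_restrict_iff' hE).2 hEbd, ae_restrict_mem hE] with y h1 h2
      rw [norm_mul]
      exact mul_le_mul h1 (hu_norm y h2) (norm_nonneg _) (Nat.cast_nonneg n)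
    -- kernel times f is an indicator
    have hbee : ∀ y, (1 : ℂ) + Complex.I * (A' y : ℂ) = bFun A' y := fun y => rfl
    have hKf : (fun y => cauchyKer A A' x y * f y) = E.indicator (fun y => c₀ * u y) := by
      funext y
      by_cases hy : y ∈ E
      · rw [hfdef, indicator_of_mem hy, indicator_of_mem hy]
        show c₀ * (bFun A' y / zeta A x y) * (bFun A' y)⁻¹ = c₀ * u y
        rw [div_eq_mul_inv]
        calc c₀ * (bFun A' y * (zeta A x y)⁻¹) * (bFun A' y)⁻¹
            = c₀ * (zeta A x y)⁻¹ * (bFun A' y * (bFun A' y)⁻¹) := by ring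
          _ = c₀ * u y := by rw [mul_inv_cancel₀ (bFun_ne_zero A' y), mul_one]
      · rw [hfdef, indicator_of_notMem hy, indicator_of_notMem hy, mul_zero]
    have hKφf : (fun y => cauchyKer A A' x y * (φ y * f y)) =
        E.indicator (fun y => c₀ * (φ y * u y)) := by
      funext y
      by_cases hy : y ∈ E
      · rw [hfdef, indicator_of_mem hy, indicator_of_mem hy]
        show c₀ * (bFun A' y / zeta A x y) * (φ y * (bFun A' y)⁻¹) = c₀ * (φ y * u y)
        rw [div_eq_mul_inv]
        calc c₀ * (bFun A' y * (zeta A x y)⁻¹) * (φ y * (bFun A' y)⁻¹)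
            = c₀ * (φ y * (zeta A x y)⁻¹) * (bFun A' y * (bFun A' y)⁻¹) := by ring
          _ = c₀ * (φ y * u y) := by rw [mul_inv_cancel₀ (bFun_ne_zero A' y), mul_one]
      · rw [hfdef, indicator_of_notMem hy, indicator_of_notMem hy, mul_zero, mul_zero]
    -- identification of CΓ f x and CΓ (φ f) x
    have h1 : CΓ f x = c₀ * ∫ y in E, u y := by
      have hint : Integrable (fun y => cauchyKer A A' x y * f y) volume := by
        rw [hKf, integrable_indicator_iff hE]
        exact hu_int.const_mul c₀
      rw [IsPV.eq_integral hr hx1 hfvan hint, hKf, integral_indicator hE,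
        integral_const_mul]
    have h2 : CΓ (fun y => φ y * f y) x = c₀ * ∫ y in E, φ y * u y := by
      have hvan : ∀ y, |y - x| ≤ r → φ y * f y = 0 := fun y hy => by
        rw [hfvan y hy, mul_zero]
      have hint : Integrable (fun y => cauchyKer A A' x y * (φ y * f y)) volume := by
        rw [hKφf, integrable_indicator_iff hE]
        exact hφu_int.const_mul c₀
      rw [IsPV.eq_integral hr hx2 hvan hint, hKφf, integral_indicator hE,
        integral_const_mul]
    -- the commutator at x
    set w : ℂ := ∫ y in E, (φ x - φ y) * u y with hwdef
    have hw_int : IntegrableOn (fun y => (φ x - φ y) * u y) E volume := by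
      have heq : (fun y => (φ x - φ y) * u y) = fun y => φ x * u y - φ y * u y :=
        funext fun y => by ring
      rw [heq]
      exact (hu_int.const_mul (φ x)).sub hφu_int
    have hgx : g x = c₀ * w := by
      show φ x * CΓ f x - CΓ (fun y => φ y * f y) x = c₀ * w
      rw [h1, h2]
      have hw : w = (φ x * ∫ y in E, u y) - ∫ y in E, φ y * u y := by
        rw [hwdef, ← integral_const_mul]
        rw [← integral_sub (hu_int.const_mul (φ x)) hφu_int]
        congr 1
        funext y
        ring
      rw [hw]
      ring
    -- real parts
    have hre_pt : ∀ y, ((φ x - φ y) * u y).re = ((φ x).re - (φ y).re) * (u y).re := by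
      intro y
      rw [Complex.mul_re, Complex.sub_re, Complex.sub_im, him x, him y]
      simp
    have hwre : w.re = ∫ y in E, ((φ x).re - (φ y).re) * (u y).re := by
      have h9 : w.re = ∫ y in E, ((φ x - φ y) * u y).re := by
        rw [hwdef]
        exact (integral_re hw_int).symm
      rw [h9]
      exact integral_congr_ae (Eventually.of_forall (fun y => hre_pt y))
    -- main case split
    rcases le_or_gt (σ * ((φ x).re - m)) 0 with hcase | hcase
    · rw [max_eq_right hcase]
      positivity
    · rw [max_eq_left hcase.le]
      have hEtoReal : r / 4 ≤ (volume E).toReal := by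
        have h3 := ENNReal.toReal_mono hvolEne hEvol
        rwa [ENNReal.toReal_ofReal (by positivity)] at h3
      have hκ : (0:ℝ) < 1 / (3 * (1 + (L:ℝ)^2) * r) := by positivity
      -- lower bound for σ * w.re
      have hlow : σ * ((φ x).re - m) * (1 / (3 * (1 + (L:ℝ)^2) * r)) * (r / 4) ≤
          σ * w.re := by
        rw [hwre, ← integral_const_mul]
        have hconst_int : IntegrableOn
            (fun _ : ℝ => σ * ((φ x).re - m) * (1 / (3 * (1 + (L:ℝ)^2) * r))) E volume :=
          integrableOn_const hvolEne
        have hint2 : IntegrableOn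
            (fun y => σ * (((φ x).re - (φ y).re) * (u y).re)) E volume := by
          have heq : (fun y => σ * (((φ x).re - (φ y).re) * (u y).re)) =
              fun y => σ * ((φ x - φ y) * u y).re := funext fun y => by rw [hre_pt y]
          rw [heq]
          exact hw_int.re.const_mul σ
        have hae : ∀ᵐ y ∂(volume.restrict E),
            σ * ((φ x).re - m) * (1 / (3 * (1 + (L:ℝ)^2) * r)) ≤
            σ * (((φ x).re - (φ y).re) * (u y).re) := by
          filter_upwards [(ae_restrict_iff' hE).2 hEsign, ae_restrict_mem hE] with y hs hyE'
          have hre1 := hu_re y hyE'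
          have hs' := hs
          have h5 : σ * ((φ x).re - m) ≤ σ * ((φ x).re - (φ y).re) := by nlinarith
          have h6 : 0 ≤ σ * ((φ x).re - (φ y).re) := le_trans hcase.le h5
          calc σ * ((φ x).re - m) * (1 / (3 * (1 + (L:ℝ)^2) * r))
              ≤ σ * ((φ x).re - (φ y).re) * (u y).re := mul_le_mul h5 hre1 hκ.le h6
            _ = σ * (((φ x).re - (φ y).re) * (u y).re) := by ring
        have hmono := integral_mono_ae hconst_int hint2 hae
        rw [setIntegral_const, measureReal_def] at hmono
        refine le_trans ?_ hmono
        rw [smul_eq_mul]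
        have h7 : 0 < σ * ((φ x).re - m) * (1 / (3 * (1 + (L:ℝ)^2) * r)) :=
          mul_pos hcase hκ
        calc σ * ((φ x).re - m) * (1 / (3 * (1 + (L:ℝ)^2) * r)) * (r / 4)
            = (r / 4) * (σ * ((φ x).re - m) * (1 / (3 * (1 + (L:ℝ)^2) * r))) := by ring
          _ ≤ (volume E).toReal * (σ * ((φ x).re - m) * (1 / (3 * (1 + (L:ℝ)^2) * r))) :=
              mul_le_mul_of_nonneg_right hEtoReal h7.le
      -- upper bound for σ * w.re
      have hub : σ * w.re ≤ Real.pi * ‖g x‖ := by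
        have h4 : σ * w.re ≤ |w.re| := by
          calc σ * w.re ≤ |σ * w.re| := le_abs_self _
            _ = |σ| * |w.re| := abs_mul _ _
            _ = |w.re| := by rw [hσ, one_mul]
        have h5 : |w.re| ≤ ‖w‖ := by
          exact Complex.abs_re_le_norm w
        have h6 : ‖w‖ = Real.pi * ‖g x‖ := by
          rw [hgx, norm_mul, hc₀norm, ← mul_assoc, mul_inv_cancel₀ Real.pi_ne_zero, one_mul]
        linarith
      -- combine
      have hid : σ * ((φ x).re - m) * (12 * (1 + (L:ℝ)^2))⁻¹ =
          σ * ((φ x).re - m) * (1 / (3 * (1 + (L:ℝ)^2) * r)) * (r / 4) := by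
        field_simp
        ring
      have h8 : σ * ((φ x).re - m) * (12 * (1 + (L:ℝ)^2))⁻¹ ≤ Real.pi * ‖g x‖ := by
        rw [hid]; linarith
      calc σ * ((φ x).re - m)
          = σ * ((φ x).re - m) * (12 * (1 + (L:ℝ)^2))⁻¹ * (12 * (1 + (L:ℝ)^2)) := by
            field_simp
        _ ≤ Real.pi * ‖g x‖ * (12 * (1 + (L:ℝ)^2)) :=
            mul_le_mul_of_nonneg_right h8 (by positivity)
        _ = 12 * (1 + (L:ℝ)^2) * Real.pi * ‖g x‖ := by ring
  -- integrate the pointwise estimate over (a, c]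
  have hIvol : volume (Ioc a c) = ENNReal.ofReal r := by
    rw [Real.volume_Ioc, hrdef]
  have hIfin : volume (Ioc a c) ≠ ⊤ := by rw [hIvol]; exact ENNReal.ofReal_ne_top
  haveI : IsFiniteMeasure (volume.restrict (Ioc a c)) :=
    ⟨by rw [Measure.restrict_apply_univ]; exact hIfin.lt_top⟩
  have hg_int : IntegrableOn g (Ioc a c) volume :=
    (hgLp.restrict (Ioc a c)).integrable hp1.le
  have hh_int : IntegrableOn (fun x => max (σ * ((φ x).re - m)) 0) (Ioc a c) volume := by
    have hφI : IntegrableOn φ (Ioc a c) volume :=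
      (hloc.integrableOn_isCompact isCompact_Icc).mono_set Ioc_subset_Icc_self
    exact (((hφI.re.sub (integrableOn_const hIfin)).const_mul σ)).pos_part
  have hmono : ∫ x in Ioc a c, max (σ * ((φ x).re - m)) 0 ≤
      ∫ x in Ioc a c, 12 * (1 + (L:ℝ)^2) * Real.pi * ‖g x‖ := by
    refine integral_mono_ae hh_int ((hg_int.norm).const_mul _) ?_
    exact (ae_restrict_iff' measurableSet_Ioc).2 hptwise
  have hnormg : ∫ x in Ioc a c, ‖g x‖ ≤ N * r := by
    have e2 : eLpNorm g p (volume.restrict (Ioc a c)) ≤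
        ENNReal.ofReal N * ENNReal.ofReal r ^ (1 / p.toReal) :=
      le_trans (eLpNorm_mono_measure g Measure.restrict_le_self)
        (le_trans hgnorm (mul_le_mul_right hf_eLp _))
    have e1 : eLpNorm g 1 (volume.restrict (Ioc a c)) ≤
        eLpNorm g p (volume.restrict (Ioc a c)) *
          (volume.restrict (Ioc a c)) univ ^ (1 / (1:ℝ≥0∞).toReal - 1 / p.toReal) :=
      eLpNorm_le_eLpNorm_mul_rpow_measure_univ hp1.le
        (hgLp.aestronglyMeasurable.restrict)
    rw [Measure.restrict_apply_univ, hIvol] at e1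
    have hofr0 : ENNReal.ofReal r ≠ 0 := by
      simp only [ne_eq, ENNReal.ofReal_eq_zero, not_le]
      exact hr
    have e3 : eLpNorm g 1 (volume.restrict (Ioc a c)) ≤ ENNReal.ofReal (N * r) := by
      refine le_trans e1 ?_
      calc eLpNorm g p (volume.restrict (Ioc a c)) *
            ENNReal.ofReal r ^ (1 / (1:ℝ≥0∞).toReal - 1 / p.toReal)
          ≤ ENNReal.ofReal N * ENNReal.ofReal r ^ (1 / p.toReal) *
            ENNReal.ofReal r ^ (1 / (1:ℝ≥0∞).toReal - 1 / p.toReal) :=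
            mul_le_mul_left e2 _
        _ = ENNReal.ofReal N * ENNReal.ofReal r := by
            rw [mul_assoc, ← ENNReal.rpow_add _ _ hofr0 ENNReal.ofReal_ne_top]
            norm_num
        _ = ENNReal.ofReal (N * r) := (ENNReal.ofReal_mul hN).symm
    have e4 : ∫ x in Ioc a c, ‖g x‖ =
        (eLpNorm g 1 (volume.restrict (Ioc a c))).toReal := by
      rw [eLpNorm_one_eq_lintegral_enorm]
      exact integral_norm_eq_lintegral_enorm (hgLp.aestronglyMeasurable.restrict)
    rw [e4]
    calc (eLpNorm g 1 (volume.restrict (Ioc a c))).toReal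
        ≤ (ENNReal.ofReal (N * r)).toReal :=
          ENNReal.toReal_mono ENNReal.ofReal_ne_top e3
      _ = N * r := ENNReal.toReal_ofReal (by positivity)
  calc ∫ x in Ioc a c, max (σ * ((φ x).re - m)) 0
      ≤ ∫ x in Ioc a c, 12 * (1 + (L:ℝ)^2) * Real.pi * ‖g x‖ := hmono
    _ = 12 * (1 + (L:ℝ)^2) * Real.pi * ∫ x in Ioc a c, ‖g x‖ := integral_const_mul _ _
    _ ≤ 12 * (1 + (L:ℝ)^2) * Real.pi * (N * r) := by
        refine mul_le_mul_of_nonneg_left hnormg (by positivity)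
    _ = 12 * (1 + (L:ℝ)^2) * Real.pi * (N * (c - a)) := by rw [hrdef]

end Core
/-- **Theorem 1.2 (lower bound).** -/
theorem memBMOb_of_commutator_bound
    (A A' : ℝ → ℝ) (L : ℝ≥0) (hA : LipschitzWith L A)
    (hA' : ∀ᵐ x ∂volume, HasDerivAt A (A' x) x)
    (hA'meas : Measurable A') (hA'bd : ∀ x, |A' x| ≤ (L : ℝ))
    (CΓ : (ℝ → ℂ) → ℝ → ℂ)
    (hCΓ : IsPVOp (cauchyKer A A') CΓ)
    (hCΓbdd : ∀ q : ℝ≥0∞, 1 < q → q < ⊤ → ∃ C : ℝ, BddOnLp q CΓ C)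
    (p : ℝ≥0∞) (hp1 : 1 < p) (hp2 : p < ⊤) :
    ∃ C : ℝ, 0 < C ∧ ∀ (𝔄 : ℝ → ℂ) (N : ℝ), 0 ≤ N →
      (∀ x, (𝔄 x / bFun A' x).im = 0) →
      LocallyIntegrable (fun x => 𝔄 x / bFun A' x) volume →
      BddOnLp p (commutatorFn (fun x => 𝔄 x / bFun A' x) CΓ) N →
      MemBMOb (bFun A') 𝔄 ∧ bmobNorm (bFun A') 𝔄 ≤ C * N := by
  refine ⟨48 * (1 + (L:ℝ)^2) * Real.pi + 1, by positivity, ?_⟩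
  intro 𝔄 N hN him hloc hbdd
  have hL2 : (0:ℝ) < 1 + (L:ℝ)^2 := by positivity
  -- the key oscillation estimate
  have key : ∀ a c : ℝ, a < c →
      meanOsc (fun x => 𝔄 x / bFun A' x) a c ≤ 48 * (1 + (L:ℝ)^2) * Real.pi * N := by
    intro a c hac
    have hr : (0:ℝ) < c - a := by linarith
    have hφm : AEStronglyMeasurable (fun x => 𝔄 x / bFun A' x) volume :=
      hloc.aestronglyMeasurable
    set ψ : ℝ → ℂ := hφm.mk _ with hψdef
    have hψM : Measurable ψ := hφm.stronglyMeasurable_mk.measurable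
    have hψae : (fun x => 𝔄 x / bFun A' x) =ᵐ[volume] ψ := hφm.ae_eq_mk
    set J : Set ℝ := Ioc (c + (c - a)) (c + 2 * (c - a)) with hJdef
    have hJvol : volume J = ENNReal.ofReal (c - a) := by
      rw [hJdef, Real.volume_Ioc]
      congr 1
      ring
    obtain ⟨m, hm1, hm2⟩ := exists_median (fun y => (ψ y).re)
      (Complex.measurable_re.comp hψM) J measurableSet_Ioc (c - a) hr hJvol
    obtain ⟨n1, hn1⟩ := exists_trunc_measure ψ {y | y ∈ J ∧ (ψ y).re ≤ m} (c - a) hr hm1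
    obtain ⟨n2, hn2⟩ := exists_trunc_measure ψ {y | y ∈ J ∧ m ≤ (ψ y).re} (c - a) hr hm2
    set E1 : Set ℝ := {y | y ∈ J ∧ (ψ y).re ≤ m} ∩ {y | ‖ψ y‖ ≤ (n1:ℝ)} with hE1def
    set E2 : Set ℝ := {y | y ∈ J ∧ m ≤ (ψ y).re} ∩ {y | ‖ψ y‖ ≤ (n2:ℝ)} with hE2def
    have hE1m : MeasurableSet E1 :=
      (measurableSet_Ioc.inter ((Complex.measurable_re.comp hψM) measurableSet_Iic)).inter
        (hψM.norm measurableSet_Iic)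
    have hE2m : MeasurableSet E2 :=
      (measurableSet_Ioc.inter ((Complex.measurable_re.comp hψM) measurableSet_Ici)).inter
        (hψM.norm measurableSet_Iic)
    have hE1J : E1 ⊆ Ioc (c + (c - a)) (c + 2 * (c - a)) := fun y hy => hy.1.1
    have hE2J : E2 ⊆ Ioc (c + (c - a)) (c + 2 * (c - a)) := fun y hy => hy.1.1
    have hbd1 : ∀ᵐ y ∂volume, y ∈ E1 → ‖𝔄 y / bFun A' y‖ ≤ (n1:ℝ) := by
      filter_upwards [hψae] with y hy hyE
      rw [hy]
      exact hyE.2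
    have hbd2 : ∀ᵐ y ∂volume, y ∈ E2 → ‖𝔄 y / bFun A' y‖ ≤ (n2:ℝ) := by
      filter_upwards [hψae] with y hy hyE
      rw [hy]
      exact hyE.2
    have hs1 : ∀ᵐ y ∂volume, y ∈ E1 → (1:ℝ) * ((𝔄 y / bFun A' y).re - m) ≤ 0 := by
      filter_upwards [hψae] with y hy hyE
      rw [one_mul, hy]
      have := hyE.1.2
      linarith
    have hs2 : ∀ᵐ y ∂volume, y ∈ E2 → (-1:ℝ) * ((𝔄 y / bFun A' y).re - m) ≤ 0 := by
      filter_upwards [hψae] with y hy hyE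
      rw [hy]
      have := hyE.1.2
      nlinarith
    have core1 := core_bound A A' L hA hA'meas CΓ hCΓ p hp1 hp2
      (fun x => 𝔄 x / bFun A' x) N hN him hloc hbdd a c m 1 hac (abs_one)
      E1 hE1m hE1J n1 hbd1 hs1 hn1
    have core2 := core_bound A A' L hA hA'meas CΓ hCΓ p hp1 hp2
      (fun x => 𝔄 x / bFun A' x) N hN him hloc hbdd a c m (-1) hac (by norm_num)
      E2 hE2m hE2J n2 hbd2 hs2 hn2
    simp only [one_mul, neg_one_mul] at core1 core2
    -- interval integrability of the various pieces
    have hIfin : volume (Ioc a c) ≠ ⊤ := by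
      rw [Real.volume_Ioc]; exact ENNReal.ofReal_ne_top
    have hIr : (volume (Ioc a c)).toReal = c - a := by
      rw [Real.volume_Ioc, ENNReal.toReal_ofReal (by linarith)]
    have hφI : IntegrableOn (fun x => 𝔄 x / bFun A' x) (Ioc a c) volume :=
      (hloc.integrableOn_isCompact isCompact_Icc).mono_set Ioc_subset_Icc_self
    have hconstI : ∀ z : ℂ, IntegrableOn (fun _ : ℝ => z) (Ioc a c) volume := fun z =>
      integrableOn_const hIfin
    have hconstIr : ∀ t : ℝ, IntegrableOn (fun _ : ℝ => t) (Ioc a c) volume := fun t =>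
      integrableOn_const hIfin
    have hpos1 : IntegrableOn (fun x => max ((𝔄 x / bFun A' x).re - m) 0) (Ioc a c) volume :=
      (hφI.re.sub (hconstIr m)).pos_part
    have hpos2 : IntegrableOn (fun x => max (-((𝔄 x / bFun A' x).re - m)) 0) (Ioc a c)
        volume := ((hφI.re.sub (hconstIr m)).neg).pos_part
    -- |φ.re − m| bound
    have habs : ∫ x in Ioc a c, |(𝔄 x / bFun A' x).re - m| ≤
        24 * (1 + (L:ℝ)^2) * Real.pi * (N * (c - a)) := by
      have hsplit : ∫ x in Ioc a c, |(𝔄 x / bFun A' x).re - m| =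
          (∫ x in Ioc a c, max ((𝔄 x / bFun A' x).re - m) 0) +
          ∫ x in Ioc a c, max (-((𝔄 x / bFun A' x).re - m)) 0 := by
        rw [← integral_add hpos1 hpos2]
        exact integral_congr_ae (Eventually.of_forall fun x => abs_eq_maxes _)
      rw [hsplit]
      have := add_le_add core1 core2
      linarith
    -- from |φ.re − m| to the mean oscillation
    have hφreal : ∀ x, (𝔄 x / bFun A' x) = (((𝔄 x / bFun A' x).re : ℝ) : ℂ) := fun x =>
      Complex.ext rfl (by rw [him x, Complex.ofReal_im])
    have hnorm_eq : ∀ x, ‖𝔄 x / bFun A' x - (m:ℂ)‖ = |(𝔄 x / bFun A' x).re - m| := by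
      intro x
      rw [hφreal x, ← Complex.ofReal_sub, Complex.norm_real, Real.norm_eq_abs]
      rw [← hφreal x]
    set M0 : ℂ := (c - a)⁻¹ • ∫ y in Ioc a c, (𝔄 y / bFun A' y) with hM0def
    have hcen : ‖(m:ℂ) - M0‖ ≤ (c - a)⁻¹ * ∫ x in Ioc a c, |(𝔄 x / bFun A' x).re - m| := by
      have h0 : (m:ℂ) - M0 = (c - a)⁻¹ • ∫ y in Ioc a c, ((m:ℂ) - 𝔄 y / bFun A' y) := by
        rw [integral_sub (hconstI (m:ℂ)) hφI, setIntegral_const, measureReal_def, hIr, smul_sub, smul_smul,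
          inv_mul_cancel₀ (ne_of_gt hr), one_smul, hM0def]
      rw [h0, norm_smul, Real.norm_eq_abs, abs_of_pos (by positivity : (0:ℝ) < (c-a)⁻¹)]
      refine mul_le_mul_of_nonneg_left ?_ (by positivity)
      refine le_trans (norm_integral_le_integral_norm _) ?_
      refine le_of_eq (integral_congr_ae (Eventually.of_forall fun y => ?_))
      show ‖(m:ℂ) - 𝔄 y / bFun A' y‖ = |(𝔄 y / bFun A' y).re - m|
      rw [norm_sub_rev, hnorm_eq y]
    have htri : ∀ x, ‖𝔄 x / bFun A' x - M0‖ ≤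
        |(𝔄 x / bFun A' x).re - m| + ‖(m:ℂ) - M0‖ := by
      intro x
      calc ‖𝔄 x / bFun A' x - M0‖
          = ‖(𝔄 x / bFun A' x - (m:ℂ)) + ((m:ℂ) - M0)‖ := by ring_nf
        _ ≤ ‖𝔄 x / bFun A' x - (m:ℂ)‖ + ‖(m:ℂ) - M0‖ := norm_add_le _ _
        _ = |(𝔄 x / bFun A' x).re - m| + ‖(m:ℂ) - M0‖ := by rw [hnorm_eq x]
    have hint_norm : IntegrableOn (fun x => ‖𝔄 x / bFun A' x - M0‖) (Ioc a c) volume :=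
      (hφI.sub (hconstI M0)).norm
    have hint_abs : IntegrableOn (fun x => |(𝔄 x / bFun A' x).re - m|) (Ioc a c) volume :=
      (hφI.re.sub (hconstIr m)).abs
    have hmain : ∫ x in Ioc a c, ‖𝔄 x / bFun A' x - M0‖ ≤
        2 * ∫ x in Ioc a c, |(𝔄 x / bFun A' x).re - m| := by
      calc ∫ x in Ioc a c, ‖𝔄 x / bFun A' x - M0‖
          ≤ ∫ x in Ioc a c, (|(𝔄 x / bFun A' x).re - m| + ‖(m:ℂ) - M0‖) :=
            integral_mono hint_norm (hint_abs.add (hconstIr _)) htri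
        _ = (∫ x in Ioc a c, |(𝔄 x / bFun A' x).re - m|) + (c - a) * ‖(m:ℂ) - M0‖ := by
            rw [integral_add hint_abs (hconstIr _), setIntegral_const, measureReal_def, hIr, smul_eq_mul]
        _ ≤ (∫ x in Ioc a c, |(𝔄 x / bFun A' x).re - m|) +
              (c - a) * ((c - a)⁻¹ * ∫ x in Ioc a c, |(𝔄 x / bFun A' x).re - m|) := by
            refine add_le_add_right (mul_le_mul_of_nonneg_left hcen (by linarith)) _
        _ = 2 * ∫ x in Ioc a c, |(𝔄 x / bFun A' x).re - m| := by
            field_simp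
            ring
    -- conclude
    have hosc : meanOsc (fun x => 𝔄 x / bFun A' x) a c =
        (c - a)⁻¹ * ∫ x in Ioc a c, ‖𝔄 x / bFun A' x - M0‖ := by
      unfold meanOsc
      rw [intervalIntegral.integral_of_le hac.le, intervalIntegral.integral_of_le hac.le]
    rw [hosc]
    calc (c - a)⁻¹ * ∫ x in Ioc a c, ‖𝔄 x / bFun A' x - M0‖
        ≤ (c - a)⁻¹ * (2 * (24 * (1 + (L:ℝ)^2) * Real.pi * (N * (c - a)))) := by
          refine mul_le_mul_of_nonneg_left ?_ (by positivity)
          refine le_trans hmain ?_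
          linarith
      _ = 48 * (1 + (L:ℝ)^2) * Real.pi * N := by
          field_simp
          ring
  -- assemble the conclusion
  have hCN : ∀ t ∈ bmoSet (fun x => 𝔄 x / bFun A' x),
      t ≤ 48 * (1 + (L:ℝ)^2) * Real.pi * N := by
    rintro t ⟨a, c, hac, rfl⟩
    exact key a c hac
  have hfinal : 48 * (1 + (L:ℝ)^2) * Real.pi * N ≤
      (48 * (1 + (L:ℝ)^2) * Real.pi + 1) * N := by nlinarith [Real.pi_pos]
  constructor
  · exact ⟨hloc, ⟨_, fun t ht => hCN t ht⟩⟩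
  · refine Real.sSup_le (fun t ht => le_trans (hCN t ht) hfinal) ?_
    positivity
end

section
/- L^2 bound and support of the bilinear form: for all compactly supported g, h ∈ L^∞(ℝ), the function Π_b(g,h) is supported in supp(g) ∪ supp(h) and belongs to L^2(ℝ), with ‖Π_b(g,h)‖_{L^2(ℝ)} ≤ C (‖g‖_{L^∞(ℝ)} ‖h‖_{L^2(ℝ)} + ‖h‖_{L^∞(ℝ)} ‖g‖_{L^2(ℝ)}), with C independent of g and h. -/
open MeasureTheory Filter Set
open scoped ENNReal Topology NNReal

/-- **`L²` bound and support of the bilinear form `Π_b`** : for compactly supported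
`g, h ∈ L^∞(ℝ)`, `Π_b(g,h)` is supported in `supp g ∪ supp h`, belongs to `L²(ℝ)`, and
`‖Π_b(g,h)‖₂ ≤ C (‖g‖_∞ ‖h‖₂ + ‖h‖_∞ ‖g‖₂)` with `C` independent of `g, h`. -/
theorem piB_L2_bound_and_support
    (A A' : ℝ → ℝ) (L : ℝ≥0) (hA : LipschitzWith L A)
    (hA' : ∀ᵐ x ∂volume, HasDerivAt A (A' x) x)
    (hA'meas : Measurable A') (hA'bd : ∀ x, |A' x| ≤ (L : ℝ))
    (CΓ CΓstar : (ℝ → ℂ) → ℝ → ℂ)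
    (hCΓ : IsPVOp (cauchyKer A A') CΓ)
    (hCΓ2 : ∃ C : ℝ, BddOnLp 2 CΓ C)
    (hadj : IsBilinAdjoint CΓ CΓstar)
    (hCΓs2 : ∃ C : ℝ, BddOnLp 2 CΓstar C) :
    ∃ C : ℝ, 0 < C ∧ ∀ g h : ℝ → ℂ,
      HasCompactSupport g → HasCompactSupport h →
      MemLp g ⊤ volume → MemLp h ⊤ volume →
      Function.support (PiB (bFun A') CΓ CΓstar g h) ⊆
        Function.support g ∪ Function.support h ∧
      MemLp (PiB (bFun A') CΓ CΓstar g h) 2 volume ∧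
      eLpNorm (PiB (bFun A') CΓ CΓstar g h) 2 volume ≤
        ENNReal.ofReal C *
          (eLpNorm g ⊤ volume * eLpNorm h 2 volume +
            eLpNorm h ⊤ volume * eLpNorm g 2 volume) := by
  obtain ⟨C₁, hC₁⟩ := hCΓ2
  obtain ⟨C₂, hC₂⟩ := hCΓs2
  refine ⟨max (max C₁ C₂) 1, lt_of_lt_of_le one_pos (le_max_right _ _), ?_⟩
  intro g h hgc hhc hg hh
  set C : ℝ := max (max C₁ C₂) 1 with hCdef
  -- g, h ∈ L²
  have hg2 : MemLp g 2 volume :=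
    hg.mono_exponent_of_measure_support_ne_top
      (fun x hx => image_eq_zero_of_notMem_tsupport hx)
      hgc.isCompact.measure_lt_top.ne le_top
  have hh2 : MemLp h 2 volume :=
    hh.mono_exponent_of_measure_support_ne_top
      (fun x hx => image_eq_zero_of_notMem_tsupport hx)
      hhc.isCompact.measure_lt_top.ne le_top
  have hTh := hC₁ h hh2
  have hTsg := hC₂ g hg2
  -- the two products
  have hprod1 : MemLp (g • CΓ h) 2 volume := hTh.1.smul hg
  have hprod2 : MemLp (h • CΓstar g) 2 volume := hTsg.1.smul hh
  have hdiff : MemLp (g • CΓ h - h • CΓstar g) 2 volume := hprod1.sub hprod2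
  -- bound on ‖b⁻¹‖
  have hbinv : ∀ x : ℝ, ‖(bFun A' x)⁻¹‖ ≤ 1 := by
    intro x
    have h1 : (1 : ℝ) ≤ ‖bFun A' x‖ := by
      have := Complex.abs_re_le_norm (bFun A' x)
      simp [bFun, Complex.add_re, Complex.mul_re] at this ⊢
      simpa using this
    rw [norm_inv]
    exact inv_le_one_of_one_le₀ h1
  have hpt : ∀ x, ‖PiB (bFun A') CΓ CΓstar g h x‖ ≤
      ‖(g • CΓ h - h • CΓstar g) x‖ := by
    intro x
    have : ‖PiB (bFun A') CΓ CΓstar g h x‖ =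
        ‖(bFun A' x)⁻¹‖ * ‖g x * CΓ h x - h x * CΓstar g x‖ := by
      simp [PiB, norm_mul]
    rw [this]
    calc ‖(bFun A' x)⁻¹‖ * ‖g x * CΓ h x - h x * CΓstar g x‖
        ≤ 1 * ‖g x * CΓ h x - h x * CΓstar g x‖ := by
          gcongr; exact hbinv x
      _ = ‖(g • CΓ h - h • CΓstar g) x‖ := by
          simp [Pi.sub_apply, Pi.smul_apply, smul_eq_mul]
  -- measurability of PiB
  have hbmeas : AEStronglyMeasurable (fun x => (bFun A' x)⁻¹) volume := by
    refine (Measurable.inv ?_).aestronglyMeasurable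
    exact measurable_const.add (measurable_const.mul (Complex.measurable_ofReal.comp hA'meas))
  have hPiBmeas : AEStronglyMeasurable (PiB (bFun A') CΓ CΓstar g h) volume := by
    have : PiB (bFun A') CΓ CΓstar g h =
        fun x => (bFun A' x)⁻¹ * (g • CΓ h - h • CΓstar g) x := by
      funext x; simp [PiB, Pi.sub_apply, Pi.smul_apply, smul_eq_mul]
    rw [this]
    exact hbmeas.mul hdiff.1
  have hPiBmem : MemLp (PiB (bFun A') CΓ CΓstar g h) 2 volume :=
    hdiff.of_le hPiBmeas (Filter.Eventually.of_forall hpt)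
  refine ⟨?_, hPiBmem, ?_⟩
  · -- support
    intro x hx
    by_contra hc
    simp only [Set.mem_union, Function.mem_support, not_or, not_not] at hc
    apply hx
    simp [PiB, hc.1, hc.2]
  · -- norm estimate
    have step1 : eLpNorm (PiB (bFun A') CΓ CΓstar g h) 2 volume ≤
        eLpNorm (g • CΓ h - h • CΓstar g) 2 volume :=
      eLpNorm_mono hpt
    have step2 : eLpNorm (g • CΓ h - h • CΓstar g) 2 volume ≤
        eLpNorm (g • CΓ h) 2 volume + eLpNorm (h • CΓstar g) 2 volume :=
      eLpNorm_sub_le hprod1.1 hprod2.1 one_le_two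
    have b1 : eLpNorm (g • CΓ h) 2 volume ≤
        eLpNorm g ⊤ volume * (ENNReal.ofReal C₁ * eLpNorm h 2 volume) :=
      le_trans (eLpNorm_smul_le_eLpNorm_top_mul_eLpNorm 2 hTh.1.1 g)
        (by gcongr; exact hTh.2)
    have b2 : eLpNorm (h • CΓstar g) 2 volume ≤
        eLpNorm h ⊤ volume * (ENNReal.ofReal C₂ * eLpNorm g 2 volume) :=
      le_trans (eLpNorm_smul_le_eLpNorm_top_mul_eLpNorm 2 hTsg.1.1 h)
        (by gcongr; exact hTsg.2)
    have hC₁C : ENNReal.ofReal C₁ ≤ ENNReal.ofReal C :=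
      ENNReal.ofReal_le_ofReal (le_trans (le_max_left _ _) (le_max_left _ _))
    have hC₂C : ENNReal.ofReal C₂ ≤ ENNReal.ofReal C :=
      ENNReal.ofReal_le_ofReal (le_trans (le_max_right _ _) (le_max_left _ _))
    calc eLpNorm (PiB (bFun A') CΓ CΓstar g h) 2 volume
        ≤ eLpNorm (g • CΓ h) 2 volume + eLpNorm (h • CΓstar g) 2 volume :=
          step1.trans step2
      _ ≤ eLpNorm g ⊤ volume * (ENNReal.ofReal C₁ * eLpNorm h 2 volume) +
          eLpNorm h ⊤ volume * (ENNReal.ofReal C₂ * eLpNorm g 2 volume) :=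
          add_le_add b1 b2
      _ = ENNReal.ofReal C₁ * (eLpNorm g ⊤ volume * eLpNorm h 2 volume) +
          ENNReal.ofReal C₂ * (eLpNorm h ⊤ volume * eLpNorm g 2 volume) := by
          ring
      _ ≤ ENNReal.ofReal C * (eLpNorm g ⊤ volume * eLpNorm h 2 volume) +
          ENNReal.ofReal C * (eLpNorm h ⊤ volume * eLpNorm g 2 volume) := by
          gcongr
      _ = ENNReal.ofReal C *
          (eLpNorm g ⊤ volume * eLpNorm h 2 volume +
            eLpNorm h ⊤ volume * eLpNorm g 2 volume) := by
          rw [mul_add]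
end

section
/- Non-degeneracy of the Cauchy integral of a far-away bump: let A : ℝ → ℝ be Lipschitz with Lipschitz constant L = ‖A'‖_∞. Let r > 0, M ≥ 100, and x0, y0 ∈ ℝ with y0 − x0 = Mr. Then | (1/(πi)) ∫_{I(y0,r)} dy / (y − x0 + i(A(y) − A(x0))) | ≥ c / M, where c > 0 depends only on L. (No principal value is needed since x0 ∉ I(y0,r).) -/
open MeasureTheory Filter Set
open scoped ENNReal Topology NNReal

/-- **Non-degeneracy of the Cauchy integral of a far-away bump** (estimate (4.3)): if `A`
is Lipschitz with constant `L`, `r > 0`, `M ≥ 100` and `y0 − x0 = M r`, then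
`|(1/(πi)) ∫_{I(y0,r)} dy / (y − x0 + i(A(y) − A(x0)))| ≥ c / M`, where `c > 0` depends
only on `L`. (No principal value is needed since `x0 ∉ I(y0,r)`.) -/
theorem cauchy_bump_nondegenerate (L : ℝ≥0) :
    ∃ c : ℝ, 0 < c ∧ ∀ A : ℝ → ℝ, LipschitzWith L A →
      ∀ x0 y0 r M : ℝ, 0 < r → 100 ≤ M → y0 - x0 = M * r →
        c / M ≤ ‖((Real.pi : ℂ) * Complex.I)⁻¹ *
          ∫ y in Metric.ball y0 r,
            1 / ((y : ℂ) - (x0 : ℂ) + Complex.I * ((A y : ℂ) - (A x0 : ℂ)))‖ := by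
  have hπ : (0:ℝ) < Real.pi := Real.pi_pos
  refine ⟨1 / (Real.pi * (1 + (L:ℝ)^2)), by positivity, ?_⟩
  intro A hA x0 y0 r M hr hM hyx
  have hMpos : (0:ℝ) < M := lt_of_lt_of_le (by norm_num) hM
  set D : ℝ → ℂ := fun y => (y : ℂ) - (x0:ℂ) + Complex.I * ((A y : ℂ) - (A x0 : ℂ)) with hD
  have hDre : ∀ y, (D y).re = y - x0 := by intro y; simp [hD]
  have hDim : ∀ y, (D y).im = A y - A x0 := by intro y; simp [hD]
  have hball : ∀ y ∈ Metric.closedBall y0 r, (M - 1) * r ≤ y - x0 ∧ y - x0 ≤ (M + 1) * r := by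
    intro y hy
    rw [Metric.mem_closedBall, Real.dist_eq, abs_le] at hy
    constructor <;> nlinarith [hy.1, hy.2]
  have hDne : ∀ y ∈ Metric.closedBall y0 r, D y ≠ 0 := by
    intro y hy h0
    have h1 := (hball y hy).1
    have : y - x0 = 0 := by rw [← hDre y, h0]; simp
    nlinarith
  have hDcont : Continuous D := by
    apply Continuous.add
    · exact Complex.continuous_ofReal.sub continuous_const
    · exact continuous_const.mul ((Complex.continuous_ofReal.comp hA.continuous).sub continuous_const)
  have hcont : ContinuousOn (fun y => 1 / D y) (Metric.closedBall y0 r) :=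
    continuousOn_const.div hDcont.continuousOn hDne
  have hint : IntegrableOn (fun y => 1 / D y) (Metric.ball y0 r) volume :=
    (hcont.integrableOn_compact (isCompact_closedBall y0 r)).mono_set Metric.ball_subset_closedBall
  -- lower bound on real part
  set c0 : ℝ := 1 / ((1 + (L:ℝ)^2) * ((M + 1) * r)) with hc0
  have hrebound : ∀ y ∈ Metric.ball y0 r, c0 ≤ (1 / D y).re := by
    intro y hy
    have hy' : y ∈ Metric.closedBall y0 r := Metric.ball_subset_closedBall hy
    obtain ⟨h1, h2⟩ := hball y hy'
    have ha : 0 < y - x0 := by nlinarith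
    have him : |A y - A x0| ≤ (L:ℝ) * (y - x0) := by
      have := hA.dist_le_mul y x0
      rw [Real.dist_eq, Real.dist_eq] at this
      calc |A y - A x0| ≤ (L:ℝ) * |y - x0| := this
        _ = (L:ℝ) * (y - x0) := by rw [abs_of_pos ha]
    have hsq : (A y - A x0)^2 ≤ (L:ℝ)^2 * (y - x0)^2 := by
      nlinarith [abs_nonneg (A y - A x0), sq_abs (A y - A x0), NNReal.coe_nonneg L]
    have hnsq : 0 < Complex.normSq (D y) := Complex.normSq_pos.2 (hDne y hy')
    have hre : (1 / D y).re = (y - x0) / Complex.normSq (D y) := by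
      rw [one_div, Complex.inv_re, hDre]
    rw [hre, hc0, div_le_div_iff₀ (by positivity) hnsq]
    have hnsq_le : Complex.normSq (D y) ≤ (1 + (L:ℝ)^2) * (y - x0)^2 := by
      rw [Complex.normSq_apply, hDre, hDim]; nlinarith
    nlinarith [mul_pos ha hr]
  have hvol : (volume (Metric.ball y0 r)).toReal = 2 * r := by
    rw [Real.volume_ball, ENNReal.toReal_ofReal (by positivity)]
  have hintlb : c0 * (2 * r) ≤ (∫ y in Metric.ball y0 r, 1 / D y).re := by
    have hcomm := Complex.reCLM.integral_comp_comm hint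
    simp only [Complex.reCLM_apply] at hcomm
    rw [← hcomm]
    calc c0 * (2 * r) = c0 * (volume (Metric.ball y0 r)).toReal := by rw [hvol]
      _ ≤ ∫ y in Metric.ball y0 r, (1 / D y).re := by
          exact setIntegral_ge_of_const_le_real measurableSet_ball
            (by rw [Real.volume_ball]; exact ENNReal.ofReal_ne_top)
            hrebound (hint.re)
  have hnormI : ‖((Real.pi : ℂ) * Complex.I)⁻¹‖ = Real.pi⁻¹ := by
    simp [norm_inv, norm_mul, Complex.norm_I, Complex.norm_real, abs_of_pos hπ]
  rw [norm_mul, hnormI]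
  have hre_le : (∫ y in Metric.ball y0 r, 1 / D y).re ≤ ‖∫ y in Metric.ball y0 r, 1 / D y‖ :=
    Complex.re_le_norm _
  have hlb : c0 * (2 * r) ≤ ‖∫ y in Metric.ball y0 r, 1 / D y‖ := le_trans hintlb hre_le
  have hc0v : c0 * (2 * r) = 2 / ((1 + (L:ℝ)^2) * (M + 1)) := by
    rw [hc0]; field_simp
  rw [hc0v] at hlb
  have hL2 : (0:ℝ) < 1 + (L:ℝ)^2 := by positivity
  have key : 1 / (Real.pi * (1 + (L:ℝ)^2)) / M ≤ Real.pi⁻¹ * (2 / ((1 + (L:ℝ)^2) * (M + 1))) := by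
    rw [show Real.pi⁻¹ * (2 / ((1 + (L:ℝ)^2) * (M + 1))) = 2 / (Real.pi * ((1 + (L:ℝ)^2) * (M + 1))) by field_simp, div_div, div_le_div_iff₀ (by positivity) (by positivity)]
    nlinarith [mul_pos hπ hL2, mul_nonneg (mul_pos hπ hL2).le (by linarith : (0:ℝ) ≤ M - 1)]
  exact key.trans (mul_le_mul_of_nonneg_left hlb (by positivity))
end

section
/- Pointwise approximation estimate: let a be an H^1_b L^∞-atom supported in I(x0,r), let M ≥ 100 and y0 = x0 + Mr, set g = χ_{I(y0,r)} and h = −a / ((C̃_Γ)*(g)(x0)). Then for a.e. x ∈ ℝ, |a(x) − Π_b(g,h)(x)| ≤ C (Mr)^{-1} (χ_{I(x0,r)}(x) + χ_{I(y0,r)}(x)), with C depending only on ‖A'‖_∞; moreover ∫_ℝ (a(x) − Π_b(g,h)(x)) b(x) dx = 0, ‖g‖_{L^2(ℝ)} ≈ r^{1/2}, and ‖h‖_{L^2(ℝ)} ≤ C M r^{-1/2}. -/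
open MeasureTheory Filter Set
open scoped ENNReal Topology NNReal

noncomputable section CauchyAuxProof

namespace CauchyAuxProof

/-- The denominator `z(a,b) = (b-a) + i(A(b)-A(a))`. -/
def zf (A : ℝ → ℝ) (a b : ℝ) : ℂ :=
  ((b : ℂ) - (a : ℂ)) + Complex.I * ((A b : ℂ) - (A a : ℂ))

lemma relKer_eq_zf (A : ℝ → ℝ) (x y : ℝ) :
    relKer A x y = ((Real.pi : ℂ) * Complex.I)⁻¹ * (zf A x y)⁻¹ := by
  simp [relKer, zf, one_div]

lemma zf_re (A : ℝ → ℝ) (a b : ℝ) : (zf A a b).re = b - a := by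
  simp [zf]

lemma zf_im (A : ℝ → ℝ) (a b : ℝ) : (zf A a b).im = A b - A a := by
  simp [zf]

lemma abs_sub_le_norm_zf (A : ℝ → ℝ) (a b : ℝ) : |b - a| ≤ ‖zf A a b‖ := by
  have h := Complex.abs_re_le_norm (zf A a b)
  rw [zf_re] at h
  simpa using h

lemma zf_ne_zero {A : ℝ → ℝ} {a b : ℝ} {d : ℝ} (hd : 0 < d) (h : d ≤ |b - a|) :
    zf A a b ≠ 0 := by
  have : 0 < ‖zf A a b‖ := lt_of_lt_of_le hd (h.trans (abs_sub_le_norm_zf A a b))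
  simpa using this.ne'

lemma norm_zf_le {L : ℝ≥0} {A : ℝ → ℝ} (hA : LipschitzWith L A) (a b : ℝ) :
    ‖zf A a b‖ ≤ (1 + (L : ℝ)) * |b - a| := by
  have h1 : ‖((b : ℂ) - (a : ℂ))‖ = |b - a| := by
    rw [← Complex.ofReal_sub, Complex.norm_real, Real.norm_eq_abs]
  have h2 : ‖Complex.I * ((A b : ℂ) - (A a : ℂ))‖ = |A b - A a| := by
    rw [norm_mul, Complex.norm_I, one_mul, ← Complex.ofReal_sub, Complex.norm_real,
      Real.norm_eq_abs]
  have h3 : |A b - A a| ≤ (L : ℝ) * |b - a| := by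
    have := hA.dist_le_mul b a
    simpa [Real.dist_eq] using this
  calc ‖zf A a b‖ ≤ ‖((b : ℂ) - (a : ℂ))‖ + ‖Complex.I * ((A b : ℂ) - (A a : ℂ))‖ :=
        norm_add_le _ _
    _ ≤ |b - a| + (L : ℝ) * |b - a| := by rw [h1, h2]; exact add_le_add_right h3 _
    _ = (1 + (L : ℝ)) * |b - a| := by ring

lemma zf_sub_left (A : ℝ → ℝ) (x x' y : ℝ) :
    zf A x y - zf A x' y = zf A x x' := by
  simp only [zf]; ring

lemma zf_sub_right (A : ℝ → ℝ) (x y y' : ℝ) :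
    zf A x y - zf A x y' = zf A y' y := by
  simp only [zf]; ring

lemma relKer_anti (A : ℝ → ℝ) (x y : ℝ) : relKer A y x = -relKer A x y := by
  rw [relKer_eq_zf, relKer_eq_zf]
  have : zf A y x = -zf A x y := by simp only [zf]; ring
  rw [this, inv_neg, mul_neg]

lemma norm_piI_inv : ‖((Real.pi : ℂ) * Complex.I)⁻¹‖ = Real.pi⁻¹ := by
  rw [norm_inv, norm_mul, Complex.norm_I, mul_one, Complex.norm_real,
    Real.norm_eq_abs, abs_of_pos Real.pi_pos]

lemma norm_inv_sub_inv (z w : ℂ) (hz : z ≠ 0) (hw : w ≠ 0) :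
    ‖z⁻¹ - w⁻¹‖ = ‖w - z‖ / (‖z‖ * ‖w‖) := by
  have h : z⁻¹ - w⁻¹ = (w - z) / (z * w) := by field_simp
  rw [h, norm_div, norm_mul]

lemma norm_inv_sub_inv_le {z w : ℂ} {D m1 m2 : ℝ} (hm1 : 0 < m1) (hm2 : 0 < m2)
    (h1 : m1 ≤ ‖z‖) (h2 : m2 ≤ ‖w‖) (hD : ‖w - z‖ ≤ D) :
    ‖z⁻¹ - w⁻¹‖ ≤ D / (m1 * m2) := by
  have hz : z ≠ 0 := by
    have : (0:ℝ) < ‖z‖ := lt_of_lt_of_le hm1 h1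
    simpa using this.ne'
  have hw : w ≠ 0 := by
    have : (0:ℝ) < ‖w‖ := lt_of_lt_of_le hm2 h2
    simpa using this.ne'
  rw [norm_inv_sub_inv z w hz hw]
  apply div_le_div₀ (le_trans (norm_nonneg _) hD) hD (by positivity)
  exact mul_le_mul h1 h2 hm2.le (norm_nonneg _)

lemma norm_relKer_sub_le {L : ℝ≥0} {A : ℝ → ℝ} (hA : LipschitzWith L A)
    {x x' y : ℝ} {D m1 m2 : ℝ} (hm1 : 0 < m1) (hm2 : 0 < m2)
    (h1 : m1 ≤ |y - x|) (h2 : m2 ≤ |y - x'|) (hD : (1 + (L : ℝ)) * |x - x'| ≤ D) :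
    ‖relKer A x y - relKer A x' y‖ ≤ Real.pi⁻¹ * (D / (m1 * m2)) := by
  rw [relKer_eq_zf, relKer_eq_zf, ← mul_sub, norm_mul, norm_piI_inv]
  have hsub : zf A x' y - zf A x y = zf A x' x := by
    have := zf_sub_left A x' x y
    linear_combination this
  have hDle : ‖zf A x' y - zf A x y‖ ≤ D := by
    rw [hsub]
    exact le_trans (norm_zf_le hA x' x) (by simpa [abs_sub_comm] using hD)
  have := norm_inv_sub_inv_le (z := zf A x y) (w := zf A x' y) hm1 hm2
    (h1.trans (abs_sub_le_norm_zf A x y)) (h2.trans (abs_sub_le_norm_zf A x' y)) hDle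
  exact mul_le_mul_of_nonneg_left this (by positivity)

lemma norm_relKer_le {A : ℝ → ℝ} {x y d : ℝ} (hd : 0 < d) (h : d ≤ |y - x|) :
    ‖relKer A x y‖ ≤ (Real.pi * d)⁻¹ := by
  rw [relKer_eq_zf, norm_mul, norm_piI_inv, norm_inv, mul_inv]
  have h1 : d ≤ ‖zf A x y‖ := h.trans (abs_sub_le_norm_zf A x y)
  have : ‖zf A x y‖⁻¹ ≤ d⁻¹ := inv_anti₀ hd h1
  exact mul_le_mul_of_nonneg_left this (by positivity)

end CauchyAuxProof

end CauchyAuxProof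

namespace CauchyAuxProof

lemma norm_relKer_sub_le₂ {L : ℝ≥0} {A : ℝ → ℝ} (hA : LipschitzWith L A)
    {x y y' : ℝ} {D m1 m2 : ℝ} (hm1 : 0 < m1) (hm2 : 0 < m2)
    (h1 : m1 ≤ |y - x|) (h2 : m2 ≤ |y' - x|) (hD : (1 + (L : ℝ)) * |y' - y| ≤ D) :
    ‖relKer A x y - relKer A x y'‖ ≤ Real.pi⁻¹ * (D / (m1 * m2)) := by
  rw [relKer_eq_zf, relKer_eq_zf, ← mul_sub, norm_mul, norm_piI_inv]
  have hsub : zf A x y' - zf A x y = zf A y y' := by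
    have := zf_sub_right A x y' y
    linear_combination this
  have hDle : ‖zf A x y' - zf A x y‖ ≤ D := by
    rw [hsub]
    exact le_trans (norm_zf_le hA y y') hD
  have hle := norm_inv_sub_inv_le (z := zf A x y) (w := zf A x y') hm1 hm2
    (h1.trans (abs_sub_le_norm_zf A x y)) (h2.trans (abs_sub_le_norm_zf A x y')) hDle
  exact mul_le_mul_of_nonneg_left hle (by positivity)

lemma num_pi_fact {l : ℝ} (hl : 0 ≤ l) : 24 * ((1+l)*(1+l^2)) ≤ 8*Real.pi*(1+l)^2*(1+l^2) := by
  have h3 : (3:ℝ) ≤ Real.pi := Real.pi_gt_three.le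
  have h8 : (24:ℝ) ≤ 8*Real.pi*(1+l) := by nlinarith
  calc 24*((1+l)*(1+l^2)) ≤ (8*Real.pi*(1+l))*((1+l)*(1+l^2)) :=
        mul_le_mul_of_nonneg_right h8 (by positivity)
    _ = 8*Real.pi*(1+l)^2*(1+l^2) := by ring

lemma num_M_fact {M : ℝ} (hM : 100 ≤ M) : M * M ≤ 24 * ((M-2)*(M-1)) := by nlinarith

lemma num1 {l M r : ℝ} (hl : 0 ≤ l) (hM : 100 ≤ M) (hr : 0 < r) :
    (2*r)⁻¹ * (Real.pi⁻¹ * (((1+l)*r) / (((M-2)*r) * ((M-1)*r))) * (2*r)) *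
      (Real.pi*(1+l^2)*M)
    ≤ (8*Real.pi*(1+l)^2*(1+l^2)+2) * (M*r)⁻¹ := by
  have hπ := Real.pi_pos
  have h2 : (0:ℝ) < M - 2 := by linarith
  have h1 : (0:ℝ) < M - 1 := by linarith
  have hM0 : (0:ℝ) < M := by linarith
  have hL : (2*r)⁻¹ * (Real.pi⁻¹ * (((1+l)*r) / (((M-2)*r) * ((M-1)*r))) * (2*r)) *
      (Real.pi*(1+l^2)*M) = ((1+l)*(1+l^2)*M) / ((M-2)*(M-1)*r) := by
    field_simp
  rw [hL, show (8*Real.pi*(1+l)^2*(1+l^2)+2) * (M*r)⁻¹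
      = (8*Real.pi*(1+l)^2*(1+l^2)+2) / (M*r) from (div_eq_mul_inv _ _).symm,
    div_le_div_iff₀ (by positivity) (by positivity)]
  have hkey := num_M_fact hM
  have hpi := num_pi_fact hl
  have hP : (0:ℝ) ≤ (1+l)*(1+l^2) := by positivity
  calc (1+l)*(1+l^2)*M * (M*r) = ((1+l)*(1+l^2)) * (M*M) * r := by ring
    _ ≤ ((1+l)*(1+l^2)) * (24*((M-2)*(M-1))) * r := by
        apply mul_le_mul_of_nonneg_right (mul_le_mul_of_nonneg_left hkey hP) hr.le
    _ = (24*((1+l)*(1+l^2))) * ((M-2)*(M-1)) * r := by ring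
    _ ≤ (8*Real.pi*(1+l)^2*(1+l^2)) * ((M-2)*(M-1)) * r := by
        apply mul_le_mul_of_nonneg_right (mul_le_mul_of_nonneg_right hpi _) hr.le
        positivity
    _ ≤ (8*Real.pi*(1+l)^2*(1+l^2)+2) * ((M-2)*(M-1)*r) := by nlinarith [mul_pos (mul_pos h2 h1) hr]

lemma num2 {l M r : ℝ} (hl : 0 ≤ l) (hM : 100 ≤ M) (hr : 0 < r) :
    Real.pi⁻¹ * (((1+l)*r) / (((M-2)*r) * ((M-1)*r))) *
      ((2*r)⁻¹ * (1+l) * (Real.pi*(1+l^2)*M)) * (2*r)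
    ≤ (8*Real.pi*(1+l)^2*(1+l^2)+2) * (M*r)⁻¹ := by
  have hπ := Real.pi_pos
  have h2 : (0:ℝ) < M - 2 := by linarith
  have h1 : (0:ℝ) < M - 1 := by linarith
  have hM0 : (0:ℝ) < M := by linarith
  have hL : Real.pi⁻¹ * (((1+l)*r) / (((M-2)*r) * ((M-1)*r))) *
      ((2*r)⁻¹ * (1+l) * (Real.pi*(1+l^2)*M)) * (2*r)
      = ((1+l)^2*(1+l^2)*M) / ((M-2)*(M-1)*r) := by
    field_simp
  rw [hL, show (8*Real.pi*(1+l)^2*(1+l^2)+2) * (M*r)⁻¹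
      = (8*Real.pi*(1+l)^2*(1+l^2)+2) / (M*r) from (div_eq_mul_inv _ _).symm,
    div_le_div_iff₀ (by positivity) (by positivity)]
  have hkey := num_M_fact hM
  have h3 : (3:ℝ) ≤ Real.pi := Real.pi_gt_three.le
  have hP : (0:ℝ) ≤ (1+l)^2*(1+l^2) := by positivity
  calc (1+l)^2*(1+l^2)*M * (M*r) = ((1+l)^2*(1+l^2)) * (M*M) * r := by ring
    _ ≤ ((1+l)^2*(1+l^2)) * (24*((M-2)*(M-1))) * r := by
        apply mul_le_mul_of_nonneg_right (mul_le_mul_of_nonneg_left hkey hP) hr.le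
    _ ≤ (8*Real.pi*(1+l)^2*(1+l^2)) * ((M-2)*(M-1)) * r := by
        have : (24:ℝ) ≤ 8*Real.pi := by linarith
        nlinarith [mul_pos h2 h1, mul_nonneg (mul_nonneg hP (mul_pos h2 h1).le) hr.le]
    _ ≤ (8*Real.pi*(1+l)^2*(1+l^2)+2) * ((M-2)*(M-1)*r) := by nlinarith [mul_pos (mul_pos h2 h1) hr]

lemma num_kappa {l M r : ℝ} (hl : 0 ≤ l) (hM : 100 ≤ M) (hr : 0 < r) :
    (Real.pi*(1+l^2)*M)⁻¹ ≤ Real.pi⁻¹ * ((((1+l^2)*((M+1)*r)))⁻¹ * (2*r)) := by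
  have hπ := Real.pi_pos
  have hM0 : (0:ℝ) < M := by linarith
  have h1 : (0:ℝ) < M + 1 := by linarith
  have hL : Real.pi⁻¹ * ((((1+l^2)*((M+1)*r)))⁻¹ * (2*r)) = 2 / (Real.pi*(1+l^2)*(M+1)) := by
    field_simp
  rw [hL, show (Real.pi*(1+l^2)*M)⁻¹ = 1 / (Real.pi*(1+l^2)*M) from (one_div _).symm,
    div_le_div_iff₀ (by positivity) (by positivity)]
  nlinarith [mul_pos hπ (by positivity : (0:ℝ) < 1 + l^2)]

lemma num_sqrt2 : Real.sqrt 2 ≤ 2 := by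
  nlinarith [Real.sq_sqrt (by norm_num : (0:ℝ) ≤ 2), Real.sqrt_nonneg 2]

lemma num3 {l M r : ℝ} (hl : 0 ≤ l) (hM : 100 ≤ M) (hr : 0 < r) :
    (2*r)⁻¹ * (Real.pi*(1+l^2)*M) * Real.sqrt (2*r)
    ≤ (8*Real.pi*(1+l)^2*(1+l^2)+2) * M / Real.sqrt r := by
  have hπ := Real.pi_pos
  have hM0 : (0:ℝ) < M := by linarith
  have hs : (0:ℝ) < Real.sqrt r := Real.sqrt_pos.mpr hr
  have hsr : Real.sqrt r * Real.sqrt r = r := Real.mul_self_sqrt hr.le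
  have h2r : Real.sqrt (2*r) = Real.sqrt 2 * Real.sqrt r := Real.sqrt_mul (by norm_num) r
  have hL : (2*r)⁻¹ * (Real.pi*(1+l^2)*M) * Real.sqrt (2*r)
      = (Real.pi*(1+l^2)*M*Real.sqrt 2/2) / Real.sqrt r := by
    rw [h2r]
    field_simp
    linear_combination hsr
  rw [hL, div_le_div_iff₀ hs hs]
  have h2 := num_sqrt2
  have hs2 : (0:ℝ) ≤ Real.sqrt 2 := Real.sqrt_nonneg 2
  apply mul_le_mul_of_nonneg_right _ hs.le
  have hq : (0:ℝ) ≤ Real.pi*(1+l^2)*M := by positivity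
  have ha1 : Real.pi*(1+l^2)*M*Real.sqrt 2/2 ≤ Real.pi*(1+l^2)*M := by nlinarith
  have hb1 : (1:ℝ) ≤ 8*(1+l)^2 := by nlinarith [sq_nonneg l]
  have hc1 : Real.pi*(1+l^2)*M ≤ (8*Real.pi*(1+l)^2*(1+l^2)+2)*M := by nlinarith [mul_pos hπ (by positivity : (0:ℝ) < (1+l^2)*M)]
  linarith

end CauchyAuxProof

set_option maxHeartbeats 2000000 in
/-- **Pointwise approximation estimate** (estimates (4.4)–(4.6)): let `a` be an
`H¹_b(ℝ)` `L^∞`-atom supported in `I(x0,r)`, `M ≥ 100`, `y0 = x0 + M r`,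
`g = χ_{I(y0,r)}` and `h = −a / ((C̃_Γ)*(g)(x0))`, where
`(C̃_Γ)*(g)(x0) = −C̃_Γ(g)(x0) = −(1/(πi)) ∫_{I(y0,r)} dy/(y − x0 + i(A(y) − A(x0)))` is
given by an absolutely convergent integral (no principal value needed, `x0 ∉ I(y0,r)`).
Then a.e. `|a − Π_b(g,h)| ≤ C (Mr)⁻¹ (χ_{I(x0,r)} + χ_{I(y0,r)})`,
`∫ (a − Π_b(g,h)) b = 0`, `‖g‖₂ ≈ r^{1/2}` and `‖h‖₂ ≤ C M r^{-1/2}`, with `C`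
depending only on `‖A'‖_∞`. (Here `C_Γ(f) = C̃_Γ(b f)` and `C_Γ* = −b • C̃_Γ`.) -/
theorem atom_pointwise_approximation
    (A A' : ℝ → ℝ) (L : ℝ≥0) (hA : LipschitzWith L A)
    (hA' : ∀ᵐ x ∂volume, HasDerivAt A (A' x) x)
    (hA'meas : Measurable A') (hA'bd : ∀ x, |A' x| ≤ (L : ℝ))
    (CΓ CΓstar Ct : (ℝ → ℂ) → ℝ → ℂ)
    (hCt : IsPVOp (relKer A) Ct)
    (hCt2 : ∃ C : ℝ, BddOnLp 2 Ct C)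
    (hCΓ2 : ∃ C : ℝ, BddOnLp 2 CΓ C)
    (hCΓs2 : ∃ C : ℝ, BddOnLp 2 CΓstar C)
    (hrel : ∀ f : ℝ → ℂ, CΓ f =ᵐ[volume] Ct (fun y => bFun A' y * f y))
    (hadj : ∀ g : ℝ → ℂ, CΓstar g =ᵐ[volume] fun x => -(bFun A' x) * Ct g x) :
    ∃ C : ℝ, 0 < C ∧
      ∀ (a : ℝ → ℂ) (x0 r M : ℝ), 0 < r → 100 ≤ M →
        (∀ x, x ∉ Metric.ball x0 r → a x = 0) →
        (∀ x, ‖a x‖ ≤ (2 * r)⁻¹) →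
        Integrable (fun x => a x * bFun A' x) volume →
        (∫ x, a x * bFun A' x) = 0 →
        ∀ y0 : ℝ, y0 = x0 + M * r →
        ∀ κ : ℂ, κ = -(((Real.pi : ℂ) * Complex.I)⁻¹ *
            ∫ y in Metric.ball y0 r,
              1 / ((y : ℂ) - (x0 : ℂ) + Complex.I * ((A y : ℂ) - (A x0 : ℂ)))) →
        ∀ g h : ℝ → ℂ,
          g = (Metric.ball y0 r).indicator (fun _ => (1 : ℂ)) →
          h = (fun x => -(a x) / κ) →
          (∀ᵐ x ∂volume, ‖a x - PiB (bFun A') CΓ CΓstar g h x‖ ≤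
              C * (M * r)⁻¹ * ((Metric.ball x0 r).indicator (fun _ => (1:ℝ)) x +
                (Metric.ball y0 r).indicator (fun _ => (1:ℝ)) x)) ∧
          (∫ x, (a x - PiB (bFun A') CΓ CΓstar g h x) * bFun A' x) = 0 ∧
          ENNReal.ofReal (C⁻¹ * Real.sqrt r) ≤ eLpNorm g 2 volume ∧
          eLpNorm g 2 volume ≤ ENNReal.ofReal (C * Real.sqrt r) ∧
          eLpNorm h 2 volume ≤ ENNReal.ofReal (C * M / Real.sqrt r) := by
  classical
  refine ⟨8*Real.pi*(1+(L:ℝ))^2*(1+(L:ℝ)^2)+2, by positivity, ?_⟩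
  intro a x0 r M hr hM hsupp habd habInt habZero y0 hy0 κ hκ g h hgdef hhdef
  set l : ℝ := (L : ℝ) with hldef
  have hl : 0 ≤ l := L.coe_nonneg
  set Cv : ℝ := 8*Real.pi*(1+l)^2*(1+l^2)+2 with hCvdef
  have hπ : (0:ℝ) < Real.pi := Real.pi_pos
  have hM0 : (0:ℝ) < M := by linarith
  have hMr : (0:ℝ) < M*r := by positivity
  set I0 : Set ℝ := Metric.ball x0 r with hI0def
  set I1 : Set ℝ := Metric.ball y0 r with hI1def
  have hI0m : MeasurableSet I0 := by rw [hI0def]; exact measurableSet_ball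
  have hI1m : MeasurableSet I1 := by rw [hI1def]; exact measurableSet_ball
  have hvol0 : volume I0 ≠ ⊤ := by rw [hI0def, Real.volume_ball]; exact ENNReal.ofReal_ne_top
  have hvol1 : volume I1 ≠ ⊤ := by rw [hI1def, Real.volume_ball]; exact ENNReal.ofReal_ne_top
  -- facts about b
  have hb_ne : ∀ x, bFun A' x ≠ 0 := by
    intro x hx
    have h1 := congrArg Complex.re hx
    simp [bFun] at h1
  have hb_one_le : ∀ x, (1:ℝ) ≤ ‖bFun A' x‖ := by
    intro x
    have h1 := Complex.abs_re_le_norm (bFun A' x)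
    have hre : (bFun A' x).re = 1 := by simp [bFun]
    rw [hre] at h1
    simpa using h1
  have hb_le : ∀ x, ‖bFun A' x‖ ≤ 1 + l := by
    intro x
    calc ‖bFun A' x‖ ≤ ‖(1:ℂ)‖ + ‖Complex.I * ((A' x : ℝ) : ℂ)‖ := norm_add_le _ _
      _ = 1 + |A' x| := by
          rw [norm_one, norm_mul, Complex.norm_I, one_mul, Complex.norm_real, Real.norm_eq_abs]
      _ ≤ 1 + l := by have := hA'bd x; rw [hldef]; linarith
  have hb_meas : Measurable (bFun A') := by
    unfold bFun
    exact measurable_const.add (measurable_const.mul (Complex.measurable_ofReal.comp hA'meas))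
  -- geometry
  have hmem0 : ∀ {x : ℝ}, x ∈ I0 → |x - x0| < r := by
    intro x hx; rw [hI0def, Metric.mem_ball, Real.dist_eq] at hx; exact hx
  have hmem1 : ∀ {x : ℝ}, x ∈ I1 → |x - y0| < r := by
    intro x hx; rw [hI1def, Metric.mem_ball, Real.dist_eq] at hx; exact hx
  have hfar01 : ∀ x ∈ I0, ∀ y ∈ I1, (M-2)*r ≤ |y - x| := by
    intro x hx y hy
    have h1 := abs_lt.mp (hmem0 hx)
    have h2 := abs_lt.mp (hmem1 hy)
    have h3 : (M-2)*r ≤ y - x := by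
      have hexp : (M-2)*r = M*r - 2*r := by ring
      rw [hexp]
      have := hy0
      linarith [h1.1, h1.2, h2.1, h2.2]
    exact h3.trans (le_abs_self _)
  have hfar10 : ∀ x ∈ I1, ∀ y ∈ I0, (M-2)*r ≤ |y - x| := by
    intro x hx y hy
    have := hfar01 y hy x hx
    rwa [abs_sub_comm]
  have hfarx0 : ∀ y ∈ I1, (M-1)*r ≤ |y - x0| := by
    intro y hy
    have h2 := abs_lt.mp (hmem1 hy)
    have h3 : (M-1)*r ≤ y - x0 := by
      have hexp : (M-1)*r = M*r - 1*r := by ring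
      rw [hexp]
      have := hy0
      linarith [h2.1, h2.2]
    exact h3.trans (le_abs_self _)
  have hnear : ∀ y ∈ I1, 0 < y - x0 ∧ y - x0 ≤ (M+1)*r := by
    intro y hy
    have h2 := abs_lt.mp (hmem1 hy)
    constructor
    · nlinarith [h2.1, h2.2]
    · nlinarith [h2.1, h2.2]
  have hfarxx0 : ∀ x ∈ I1, (M-1)*r ≤ |x0 - x| := by
    intro x hx
    have := hfarx0 x hx
    rwa [abs_sub_comm]
  have hdisj : ∀ {x : ℝ}, x ∈ I0 → x ∉ I1 := by
    intro x hx hx1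
    have h1 := hfar01 x hx x hx1
    rw [sub_self, abs_zero] at h1
    nlinarith
  have hM2r : (0:ℝ) < (M-2)*r := by nlinarith
  have hM1r : (0:ℝ) < (M-1)*r := by nlinarith
  -- measurability of kernels
  have hAc : Continuous A := hA.continuous
  have hzc : ∀ x', Continuous fun y => CauchyAuxProof.zf A x' y := by
    intro x'
    simp only [CauchyAuxProof.zf]
    exact ((Complex.continuous_ofReal.sub continuous_const).add
      (continuous_const.mul ((Complex.continuous_ofReal.comp hAc).sub continuous_const)))
  have hKfun : ∀ x', (fun y => relKer A x' y)
      = fun y => ((Real.pi:ℂ)*Complex.I)⁻¹ * (CauchyAuxProof.zf A x' y)⁻¹ := by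
    intro x'; funext y; exact CauchyAuxProof.relKer_eq_zf A x' y
  have hKmeas : ∀ x', Measurable fun y => relKer A x' y := by
    intro x'
    rw [hKfun x']
    exact measurable_const.mul ((hzc x').measurable.inv)
  have hKint : ∀ (x' : ℝ) (s : Set ℝ) (d : ℝ), volume s ≠ ⊤ → MeasurableSet s → 0 < d →
      (∀ y ∈ s, d ≤ |y - x'|) →
      IntegrableOn (fun y => relKer A x' y) s volume := by
    intro x' s d hsfin hsm hd hdist
    apply Measure.integrableOn_of_bounded hsfin ((hKmeas x').aestronglyMeasurable)
    refine (ae_restrict_iff' hsm).2 (ae_of_all _ fun y hy => ?_)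
    exact CauchyAuxProof.norm_relKer_le hd (hdist y hy)
  -- the function G and the value of κ
  set G : ℝ → ℂ := fun t => ∫ y in I1, relKer A t y with hGdef
  have hκG : κ = -G x0 := by
    rw [hκ]
    simp only [hGdef, relKer]
    rw [MeasureTheory.integral_const_mul]
  -- lower bound for ‖κ‖
  have hreInt : IntegrableOn (fun y => (CauchyAuxProof.zf A x0 y)⁻¹) I1 volume := by
    apply Measure.integrableOn_of_bounded (M := ((M-1)*r)⁻¹) hvol1
      ((hzc x0).measurable.inv.aestronglyMeasurable)
    refine (ae_restrict_iff' hI1m).2 (ae_of_all _ fun y hy => ?_)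
    rw [Pi.inv_apply, norm_inv]
    exact inv_anti₀ hM1r
      ((hfarx0 y hy).trans (CauchyAuxProof.abs_sub_le_norm_zf A x0 y))
  have hint_eq : (∫ y in I1, 1 / ((y:ℂ) - (x0:ℂ) + Complex.I*((A y:ℂ) - (A x0:ℂ))))
      = ∫ y in I1, (CauchyAuxProof.zf A x0 y)⁻¹ := by
    simp only [one_div]
    rfl
  have hre_lb : ∀ y ∈ I1, ((1+l^2)*((M+1)*r))⁻¹ ≤ ((CauchyAuxProof.zf A x0 y)⁻¹).re := by
    intro y hy
    obtain ⟨hu1, hu2⟩ := hnear y hy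
    have him : |A y - A x0| ≤ l * (y - x0) := by
      have h1 := hA.dist_le_mul y x0
      rw [Real.dist_eq, Real.dist_eq] at h1
      calc |A y - A x0| ≤ l * |y - x0| := h1
        _ = l * (y - x0) := by rw [abs_of_pos hu1]
    rw [Complex.inv_re, Complex.normSq_apply, CauchyAuxProof.zf_re, CauchyAuxProof.zf_im]
    have hns_pos : 0 < (y-x0)*(y-x0) + (A y - A x0)*(A y - A x0) := by nlinarith
    have hns_le : (y-x0)*(y-x0) + (A y - A x0)*(A y - A x0) ≤ (1+l^2)*((y-x0)*(y-x0)) := by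
      nlinarith [abs_nonneg (A y - A x0), sq_abs (A y - A x0)]
    rw [le_div_iff₀ hns_pos]
    calc ((1+l^2)*((M+1)*r))⁻¹ * ((y-x0)*(y-x0) + (A y - A x0)*(A y - A x0))
        ≤ ((1+l^2)*((M+1)*r))⁻¹ * ((1+l^2)*((y-x0)*(y-x0))) :=
          mul_le_mul_of_nonneg_left hns_le (by positivity)
      _ = (y-x0) * ((y-x0) / ((M+1)*r)) := by
          field_simp
      _ ≤ (y-x0) * 1 :=
          mul_le_mul_of_nonneg_left ((div_le_one (by positivity)).mpr hu2) hu1.le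
      _ = y - x0 := mul_one _
  have hre_int : (∫ y in I1, ((CauchyAuxProof.zf A x0 y)⁻¹).re)
      = (∫ y in I1, (CauchyAuxProof.zf A x0 y)⁻¹).re := by
    have h1 := integral_re (μ := volume.restrict I1) hreInt
    simpa using h1
  have hconst_le : ((1+l^2)*((M+1)*r))⁻¹ * (2*r)
      ≤ ∫ y in I1, ((CauchyAuxProof.zf A x0 y)⁻¹).re := by
    have h1 : (∫ _ in I1, ((1+l^2)*((M+1)*r))⁻¹ ∂volume)
        ≤ ∫ y in I1, ((CauchyAuxProof.zf A x0 y)⁻¹).re := by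
      apply setIntegral_mono_on (integrableOn_const hvol1) hreInt.re hI1m
      intro y hy
      exact hre_lb y hy
    have h2 : (∫ _ in I1, ((1+l^2)*((M+1)*r))⁻¹ ∂volume)
        = ((1+l^2)*((M+1)*r))⁻¹ * (2*r) := by
      rw [setIntegral_const, hI1def, measureReal_def, Real.volume_ball, ENNReal.toReal_ofReal (by positivity),
        smul_eq_mul]
      ring
    linarith
  have hre_le : (∫ y in I1, (CauchyAuxProof.zf A x0 y)⁻¹).re
      ≤ ‖∫ y in I1, (CauchyAuxProof.zf A x0 y)⁻¹‖ := by
    have h1 := Complex.re_le_norm (∫ y in I1, (CauchyAuxProof.zf A x0 y)⁻¹)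
    simpa using h1
  have hκ_lb : (Real.pi*(1+l^2)*M)⁻¹ ≤ ‖κ‖ := by
    calc (Real.pi*(1+l^2)*M)⁻¹ ≤ Real.pi⁻¹ * (((1+l^2)*((M+1)*r))⁻¹ * (2*r)) :=
          CauchyAuxProof.num_kappa hl hM hr
      _ ≤ Real.pi⁻¹ * ‖∫ y in I1, (CauchyAuxProof.zf A x0 y)⁻¹‖ := by
          apply mul_le_mul_of_nonneg_left _ (by positivity)
          calc ((1+l^2)*((M+1)*r))⁻¹ * (2*r)
              ≤ ∫ y in I1, ((CauchyAuxProof.zf A x0 y)⁻¹).re := hconst_le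
            _ = (∫ y in I1, (CauchyAuxProof.zf A x0 y)⁻¹).re := hre_int
            _ ≤ _ := hre_le
      _ = ‖κ‖ := by rw [hκ, norm_neg, norm_mul, CauchyAuxProof.norm_piI_inv, hint_eq]
  have hκ_pos : (0:ℝ) < ‖κ‖ := lt_of_lt_of_le (by positivity) hκ_lb
  have hκ_ne : κ ≠ 0 := by
    intro h0
    rw [h0, norm_zero] at hκ_pos
    exact lt_irrefl _ hκ_pos
  have hκinv : ‖κ‖⁻¹ ≤ Real.pi*(1+l^2)*M := by
    have h1 := inv_anti₀ (by positivity : (0:ℝ) < (Real.pi*(1+l^2)*M)⁻¹) hκ_lb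
    rwa [inv_inv] at h1
  -- a is a.e. strongly measurable
  have ha_aesm : AEStronglyMeasurable a volume := by
    have h1 : AEStronglyMeasurable (fun x => (a x * bFun A' x) * (bFun A' x)⁻¹) volume :=
      habInt.aestronglyMeasurable.mul (hb_meas.inv.aestronglyMeasurable)
    refine h1.congr (Eventually.of_forall fun x => ?_)
    exact mul_inv_cancel_right₀ (hb_ne x) (a x)
  -- the function W
  set W : ℝ → ℂ := fun y => bFun A' y * h y with hWdef
  have hWa : ∀ y, W y = -κ⁻¹ * (a y * bFun A' y) := by
    intro y
    simp only [hWdef, hhdef]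
    ring
  have hW0 : ∀ y, y ∉ I0 → W y = 0 := by
    intro y hy
    rw [hWa y, hsupp y hy]
    ring
  have hW_int : Integrable W volume :=
    (habInt.const_mul (-κ⁻¹)).congr (Eventually.of_forall fun y => (hWa y).symm)
  have hW_aesm : AEStronglyMeasurable W volume := hW_int.aestronglyMeasurable
  have hW_bd : ∀ y, ‖W y‖ ≤ (2*r)⁻¹ * (1+l) * (Real.pi*(1+l^2)*M) := by
    intro y
    rw [hWa y, norm_mul, norm_neg, norm_inv, norm_mul]
    calc ‖κ‖⁻¹ * (‖a y‖ * ‖bFun A' y‖)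
        ≤ (Real.pi*(1+l^2)*M) * ((2*r)⁻¹ * (1+l)) := by
          apply mul_le_mul hκinv
          · exact mul_le_mul (habd y) (hb_le y) (norm_nonneg _) (by positivity)
          · positivity
          · positivity
      _ = (2*r)⁻¹ * (1+l) * (Real.pi*(1+l^2)*M) := by ring
  -- membership in L²
  have hg_mem : MemLp g 2 volume := by
    rw [hgdef]
    exact memLp_indicator_const 2 hI1m (1:ℂ) (Or.inr hvol1)
  have hW_mem : MemLp W 2 volume := by
    have hDWpos : (0:ℝ) < (2*r)⁻¹ * (1+l) * (Real.pi*(1+l^2)*M) := by positivity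
    refine MemLp.of_le
      (memLp_indicator_const 2 hI0m ((2*r)⁻¹ * (1+l) * (Real.pi*(1+l^2)*M)) (Or.inr hvol0))
      hW_aesm (Eventually.of_forall fun y => ?_)
    by_cases hy : y ∈ I0
    · rw [Set.indicator_of_mem hy, Real.norm_eq_abs, abs_of_pos hDWpos]
      exact hW_bd y
    · rw [hW0 y hy, Set.indicator_of_notMem hy]
      simp
  -- the function F
  set F : ℝ → ℂ := fun t => ∫ y in I0, relKer A t y * W y with hFdef
  -- principal values
  have hpvG : ∀ x ∈ I0, IsPV (relKer A) g x (G x) := by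
    intro x hx
    have hsub : ∀ ε ∈ Set.Ioo (0:ℝ) ((M-2)*r),
        (∫ y in {y : ℝ | ε < |y - x|}, relKer A x y * g y) = G x := by
      intro ε hε
      rw [hgdef]
      have hptw : ∀ y, relKer A x y * (Set.indicator I1 (fun _ => (1:ℂ)) y)
          = Set.indicator I1 (fun y => relKer A x y) y := by
        intro y; by_cases hy : y ∈ I1 <;> simp [hy]
      have hseteq : {y : ℝ | ε < |y - x|} ∩ I1 = I1 :=
        Set.inter_eq_right.mpr fun y hy => lt_of_lt_of_le hε.2 (hfar01 x hx y hy)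
      rw [integral_congr_ae (Eventually.of_forall hptw), setIntegral_indicator hI1m, hseteq]
    refine Filter.Tendsto.congr' ?_ tendsto_const_nhds
    filter_upwards [Ioo_mem_nhdsGT_of_mem (Set.mem_Ico.mpr ⟨le_refl (0:ℝ), hM2r⟩)] with ε hε
    exact (hsub ε hε).symm
  have hpvF : ∀ x ∈ I1, IsPV (relKer A) W x (F x) := by
    intro x hx
    have hsub : ∀ ε ∈ Set.Ioo (0:ℝ) ((M-2)*r),
        (∫ y in {y : ℝ | ε < |y - x|}, relKer A x y * W y) = F x := by
      intro ε hε
      have hptw : ∀ y, relKer A x y * W y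
          = Set.indicator I0 (fun y => relKer A x y * W y) y := by
        intro y
        by_cases hy : y ∈ I0
        · rw [Set.indicator_of_mem hy]
        · rw [Set.indicator_of_notMem hy, hW0 y hy, mul_zero]
      have hseteq : {y : ℝ | ε < |y - x|} ∩ I0 = I0 :=
        Set.inter_eq_right.mpr fun y hy => lt_of_lt_of_le hε.2 (hfar10 x hx y hy)
      rw [integral_congr_ae (Eventually.of_forall hptw), setIntegral_indicator hI0m, hseteq]
    refine Filter.Tendsto.congr' ?_ tendsto_const_nhds
    filter_upwards [Ioo_mem_nhdsGT_of_mem (Set.mem_Ico.mpr ⟨le_refl (0:ℝ), hM2r⟩)] with ε hε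
    exact (hsub ε hε).symm
  have hCtg := hCt 2 (by norm_num) (by exact ENNReal.ofNat_lt_top) g hg_mem
  have hCtW := hCt 2 (by norm_num) (by exact ENNReal.ofNat_lt_top) W hW_mem
  have hrelh : CΓ h =ᵐ[volume] Ct W := hrel h
  have hadjg := hadj g
  -- the key pointwise identity
  have key : ∀ᵐ x ∂volume, PiB (bFun A') CΓ CΓstar g h x * bFun A' x
      = Set.indicator I1 F x + W x * G x := by
    filter_upwards [hCtg, hCtW, hrelh, hadjg] with x hx1 hx2 hx3 hx4
    have hPiBb : PiB (bFun A') CΓ CΓstar g h x * bFun A' x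
        = g x * Ct W x + W x * Ct g x := by
      calc PiB (bFun A') CΓ CΓstar g h x * bFun A' x
          = (bFun A' x)⁻¹ * (g x * CΓ h x - h x * CΓstar g x) * bFun A' x := rfl
        _ = g x * CΓ h x - h x * CΓstar g x := by
            rw [mul_comm ((bFun A' x)⁻¹) _, mul_assoc, inv_mul_cancel₀ (hb_ne x), mul_one]
        _ = g x * Ct W x + W x * Ct g x := by
            rw [hx3, hx4]
            simp only [hWdef]
            ring
    rw [hPiBb]
    by_cases hx0 : x ∈ I0
    · have hxn1 : x ∉ I1 := hdisj hx0
      have hgx : g x = 0 := by rw [hgdef]; exact Set.indicator_of_notMem hxn1 _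
      have hCtgx : Ct g x = G x := tendsto_nhds_unique hx1 (hpvG x hx0)
      rw [hgx, hCtgx, Set.indicator_of_notMem hxn1]
      ring
    · by_cases hx1' : x ∈ I1
      · have hWx : W x = 0 := hW0 x hx0
        have hgx : g x = 1 := by rw [hgdef]; exact Set.indicator_of_mem hx1' _
        have hCtWx : Ct W x = F x := tendsto_nhds_unique hx2 (hpvF x hx1')
        rw [hWx, hgx, hCtWx, Set.indicator_of_mem hx1']
        ring
      · have hWx : W x = 0 := hW0 x hx0
        have hgx : g x = 0 := by rw [hgdef]; exact Set.indicator_of_notMem hx1' _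
        rw [hWx, hgx, Set.indicator_of_notMem hx1']
        ring
  refine ⟨?_, ?_, ?_, ?_, ?_⟩
  · -- pointwise estimate
    filter_upwards [key] with x hkx
    have hPiBx : PiB (bFun A') CΓ CΓstar g h x
        = (bFun A' x)⁻¹ * (Set.indicator I1 F x + W x * G x) := by
      calc PiB (bFun A') CΓ CΓstar g h x
          = (bFun A' x)⁻¹ * (PiB (bFun A') CΓ CΓstar g h x * bFun A' x) := by
            rw [mul_comm (PiB (bFun A') CΓ CΓstar g h x) (bFun A' x),
              ← mul_assoc, inv_mul_cancel₀ (hb_ne x), one_mul]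
        _ = (bFun A' x)⁻¹ * (Set.indicator I1 F x + W x * G x) := by rw [hkx]
    by_cases hx0 : x ∈ I0
    · -- x ∈ I0
      have hxn1 : x ∉ I1 := hdisj hx0
      have hPiB2 : PiB (bFun A') CΓ CΓstar g h x = h x * G x := by
        rw [hPiBx, Set.indicator_of_notMem hxn1, zero_add]
        simp only [hWdef]
        rw [show (bFun A' x)⁻¹ * (bFun A' x * h x * G x)
            = ((bFun A' x)⁻¹ * bFun A' x) * (h x * G x) from by ring,
          inv_mul_cancel₀ (hb_ne x), one_mul]
      have hGint1 : IntegrableOn (fun y => relKer A x y) I1 volume :=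
        hKint x I1 ((M-2)*r) hvol1 hI1m hM2r (fun y hy => hfar01 x hx0 y hy)
      have hGint2 : IntegrableOn (fun y => relKer A x0 y) I1 volume :=
        hKint x0 I1 ((M-1)*r) hvol1 hI1m hM1r (fun y hy => hfarx0 y hy)
      have hGdiff : κ + G x = ∫ y in I1, (relKer A x y - relKer A x0 y) := by
        rw [integral_sub hGint1 hGint2, hκG]
        simp only [hGdef]
        ring
      have hbd1 : ‖κ + G x‖
          ≤ Real.pi⁻¹ * (((1+l)*r) / (((M-2)*r)*((M-1)*r))) * (2*r) := by
        rw [hGdiff]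
        have h1 := norm_setIntegral_le_of_norm_le_const (μ := volume) (s := I1)
          (f := fun y => relKer A x y - relKer A x0 y)
          (C := Real.pi⁻¹ * (((1+l)*r) / (((M-2)*r)*((M-1)*r))))
          hvol1.lt_top
          (fun y hy => CauchyAuxProof.norm_relKer_sub_le hA hM2r hM1r
            (hfar01 x hx0 y hy) (hfarx0 y hy)
            (mul_le_mul_of_nonneg_left (hmem0 hx0).le (by positivity)))
        calc ‖∫ y in I1, (relKer A x y - relKer A x0 y)‖
            ≤ Real.pi⁻¹ * (((1+l)*r) / (((M-2)*r)*((M-1)*r))) * (volume I1).toReal := h1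
          _ = Real.pi⁻¹ * (((1+l)*r) / (((M-2)*r)*((M-1)*r))) * (2*r) := by
              rw [hI1def, Real.volume_ball, ENNReal.toReal_ofReal (by positivity)]
      have hval : a x - h x * G x = a x * (κ + G x) / κ := by
        simp only [hhdef]
        field_simp
        ring
      rw [hPiB2, hval, norm_div, norm_mul]
      have hfin : ‖a x‖ * ‖κ + G x‖ / ‖κ‖
          ≤ (2*r)⁻¹ * (Real.pi⁻¹ * (((1+l)*r) / (((M-2)*r)*((M-1)*r))) * (2*r)) *
            (Real.pi*(1+l^2)*M) := by
        rw [div_eq_mul_inv]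
        apply mul_le_mul _ hκinv (inv_nonneg.mpr (norm_nonneg _)) (by positivity)
        exact mul_le_mul (habd x) hbd1 (norm_nonneg _) (by positivity)
      refine le_trans hfin (le_trans (CauchyAuxProof.num1 hl hM hr) ?_)
      rw [Set.indicator_of_mem hx0, Set.indicator_of_notMem hxn1, hCvdef, add_zero, mul_one]
    · by_cases hx1' : x ∈ I1
      · -- x ∈ I1
        have hax : a x = 0 := hsupp x hx0
        have hWx : W x = 0 := hW0 x hx0
        have hPiB2 : PiB (bFun A') CΓ CΓstar g h x = (bFun A' x)⁻¹ * F x := by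
          rw [hPiBx, Set.indicator_of_mem hx1', hWx, zero_mul, add_zero]
        have hKW_int : IntegrableOn (fun y => relKer A x y * W y) I0 volume := by
          apply Measure.integrableOn_of_bounded
            (f := fun y => relKer A x y * W y)
            (M := (Real.pi*((M-2)*r))⁻¹ * ((2*r)⁻¹ * (1+l) * (Real.pi*(1+l^2)*M)))
            hvol0 (((hKmeas x).aestronglyMeasurable).mul hW_aesm)
          refine (ae_restrict_iff' hI0m).2 (ae_of_all _ fun y hy => ?_)
          rw [norm_mul]
          exact mul_le_mul (CauchyAuxProof.norm_relKer_le hM2r (hfar10 x hx1' y hy))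
            (hW_bd y) (norm_nonneg _) (by positivity)
        have hconst_int : IntegrableOn (fun y => relKer A x x0 * W y) I0 volume :=
          (hW_int.restrict (s := I0)).const_mul _
        have hWI0_zero : (∫ y in I0, W y) = 0 := by
          rw [setIntegral_eq_integral_of_forall_compl_eq_zero (fun y hy => hW0 y hy)]
          have h2 : (∫ y, W y) = -κ⁻¹ * ∫ y, a y * bFun A' y := by
            rw [← MeasureTheory.integral_const_mul]
            exact integral_congr_ae (Eventually.of_forall fun y => hWa y)
          rw [h2, habZero, mul_zero]
        have hFx : F x = ∫ y in I0, (relKer A x y - relKer A x x0) * W y := by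
          symm
          calc ∫ y in I0, (relKer A x y - relKer A x x0) * W y
              = (∫ y in I0, relKer A x y * W y) - ∫ y in I0, relKer A x x0 * W y := by
                rw [← integral_sub hKW_int hconst_int]
                exact integral_congr_ae (Eventually.of_forall fun y => by ring)
            _ = F x := by
                rw [MeasureTheory.integral_const_mul, hWI0_zero, mul_zero, sub_zero]
        have hbd2 : ‖F x‖ ≤ Real.pi⁻¹ * (((1+l)*r) / (((M-2)*r)*((M-1)*r))) *
            ((2*r)⁻¹ * (1+l) * (Real.pi*(1+l^2)*M)) * (2*r) := by
          rw [hFx]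
          have h1 := norm_setIntegral_le_of_norm_le_const (μ := volume) (s := I0)
            (f := fun y => (relKer A x y - relKer A x x0) * W y)
            (C := Real.pi⁻¹ * (((1+l)*r) / (((M-2)*r)*((M-1)*r))) *
              ((2*r)⁻¹ * (1+l) * (Real.pi*(1+l^2)*M)))
            hvol0.lt_top
            (fun y hy => by
              rw [norm_mul]
              refine mul_le_mul (CauchyAuxProof.norm_relKer_sub_le₂ hA hM2r hM1r
                (hfar10 x hx1' y hy) (hfarxx0 x hx1')
                (mul_le_mul_of_nonneg_left ?_ (by positivity)))
                (hW_bd y) (norm_nonneg _) (by positivity)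
              rw [abs_sub_comm]
              exact (hmem0 hy).le)
          calc ‖∫ y in I0, (relKer A x y - relKer A x x0) * W y‖
              ≤ Real.pi⁻¹ * (((1+l)*r) / (((M-2)*r)*((M-1)*r))) *
                  ((2*r)⁻¹ * (1+l) * (Real.pi*(1+l^2)*M)) * (volume I0).toReal := h1
            _ = Real.pi⁻¹ * (((1+l)*r) / (((M-2)*r)*((M-1)*r))) *
                  ((2*r)⁻¹ * (1+l) * (Real.pi*(1+l^2)*M)) * (2*r) := by
                rw [hI0def, Real.volume_ball, ENNReal.toReal_ofReal (by positivity)]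
        rw [hPiB2]
        have hnorm2 : ‖a x - (bFun A' x)⁻¹ * F x‖ ≤ ‖F x‖ := by
          rw [hax, zero_sub, norm_neg, norm_mul, norm_inv]
          calc ‖bFun A' x‖⁻¹ * ‖F x‖ ≤ 1 * ‖F x‖ := by
                apply mul_le_mul_of_nonneg_right _ (norm_nonneg _)
                rw [inv_le_one_iff₀]
                right
                exact hb_one_le x
            _ = ‖F x‖ := one_mul _
        refine le_trans hnorm2 (le_trans hbd2 (le_trans (CauchyAuxProof.num2 hl hM hr) ?_))
        rw [Set.indicator_of_notMem hx0, Set.indicator_of_mem hx1', hCvdef, zero_add, mul_one]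
      · -- x outside both
        have hax : a x = 0 := hsupp x hx0
        have hWx : W x = 0 := hW0 x hx0
        have hPiB2 : PiB (bFun A') CΓ CΓstar g h x = 0 := by
          rw [hPiBx, Set.indicator_of_notMem hx1', hWx, zero_mul, add_zero, mul_zero]
        rw [hPiB2, hax, sub_zero, norm_zero, Set.indicator_of_notMem hx0,
          Set.indicator_of_notMem hx1']
        simp
  · -- vanishing integral
    haveI hfin1 : IsFiniteMeasure (volume.restrict I1) :=
      ⟨by rw [Measure.restrict_apply_univ]; exact hvol1.lt_top⟩
    haveI hfin0 : IsFiniteMeasure (volume.restrict I0) :=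
      ⟨by rw [Measure.restrict_apply_univ]; exact hvol0.lt_top⟩
    have hzc2 : Continuous fun p : ℝ × ℝ => CauchyAuxProof.zf A p.1 p.2 := by
      simp only [CauchyAuxProof.zf]
      exact (((Complex.continuous_ofReal.comp continuous_snd).sub
          (Complex.continuous_ofReal.comp continuous_fst)).add
        (continuous_const.mul ((Complex.continuous_ofReal.comp (hAc.comp continuous_snd)).sub
          (Complex.continuous_ofReal.comp (hAc.comp continuous_fst)))))
    have hKmeas2 : Measurable fun p : ℝ × ℝ => relKer A p.1 p.2 := by
      have hfun : (fun p : ℝ × ℝ => relKer A p.1 p.2)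
          = fun p => ((Real.pi:ℂ)*Complex.I)⁻¹ * (CauchyAuxProof.zf A p.1 p.2)⁻¹ := by
        funext p
        exact CauchyAuxProof.relKer_eq_zf A p.1 p.2
      rw [hfun]
      exact measurable_const.mul (hzc2.measurable.inv)
    have haemem : ∀ᵐ p : ℝ × ℝ ∂((volume.restrict I1).prod (volume.restrict I0)),
        p.1 ∈ I1 ∧ p.2 ∈ I0 := by
      have h1 : ∀ᵐ p : ℝ × ℝ ∂((volume.restrict I1).prod (volume.restrict I0)), p.1 ∈ I1 := by
        rw [ae_iff]
        refine measure_mono_null (fun p hp =>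
          (Set.mem_prod.mpr ⟨hp, Set.mem_univ _⟩ : p ∈ (I1ᶜ ×ˢ (Set.univ : Set ℝ)))) ?_
        rw [Measure.prod_prod, Measure.restrict_apply hI1m.compl, Set.compl_inter_self,
          measure_empty, zero_mul]
      have h2 : ∀ᵐ p : ℝ × ℝ ∂((volume.restrict I1).prod (volume.restrict I0)), p.2 ∈ I0 := by
        rw [ae_iff]
        refine measure_mono_null (fun p hp =>
          (Set.mem_prod.mpr ⟨Set.mem_univ _, hp⟩ : p ∈ ((Set.univ : Set ℝ) ×ˢ I0ᶜ))) ?_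
        rw [Measure.prod_prod, Measure.restrict_apply hI0m.compl, Set.compl_inter_self,
          measure_empty, mul_zero]
      exact h1.and h2
    have haemem2 : ∀ᵐ p : ℝ × ℝ ∂((volume.restrict I0).prod (volume.restrict I1)),
        p.1 ∈ I0 ∧ p.2 ∈ I1 := by
      have h1 : ∀ᵐ p : ℝ × ℝ ∂((volume.restrict I0).prod (volume.restrict I1)), p.1 ∈ I0 := by
        rw [ae_iff]
        refine measure_mono_null (fun p hp =>
          (Set.mem_prod.mpr ⟨hp, Set.mem_univ _⟩ : p ∈ (I0ᶜ ×ˢ (Set.univ : Set ℝ)))) ?_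
        rw [Measure.prod_prod, Measure.restrict_apply hI0m.compl, Set.compl_inter_self,
          measure_empty, zero_mul]
      have h2 : ∀ᵐ p : ℝ × ℝ ∂((volume.restrict I0).prod (volume.restrict I1)), p.2 ∈ I1 := by
        rw [ae_iff]
        refine measure_mono_null (fun p hp =>
          (Set.mem_prod.mpr ⟨Set.mem_univ _, hp⟩ : p ∈ ((Set.univ : Set ℝ) ×ˢ I1ᶜ))) ?_
        rw [Measure.prod_prod, Measure.restrict_apply hI1m.compl, Set.compl_inter_self,
          measure_empty, mul_zero]
      exact h1.and h2
    have hprod1 : Integrable (Function.uncurry fun x y => relKer A x y * W y)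
        ((volume.restrict I1).prod (volume.restrict I0)) := by
      have haesm : AEStronglyMeasurable (Function.uncurry fun x y => relKer A x y * W y)
          ((volume.restrict I1).prod (volume.restrict I0)) :=
        (hKmeas2.aestronglyMeasurable).mul ((hW_aesm.restrict (s := I0)).comp_snd)
      refine Integrable.mono' (integrable_const
        ((Real.pi*((M-2)*r))⁻¹ * ((2*r)⁻¹ * (1+l) * (Real.pi*(1+l^2)*M)))) haesm ?_
      filter_upwards [haemem] with p hp
      show ‖relKer A p.1 p.2 * W p.2‖ ≤ _
      rw [norm_mul]
      exact mul_le_mul (CauchyAuxProof.norm_relKer_le hM2r (hfar10 p.1 hp.1 p.2 hp.2))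
        (hW_bd p.2) (norm_nonneg _) (by positivity)
    have hprod2 : Integrable (Function.uncurry fun x y => W x * relKer A x y)
        ((volume.restrict I0).prod (volume.restrict I1)) := by
      have haesm : AEStronglyMeasurable (Function.uncurry fun x y => W x * relKer A x y)
          ((volume.restrict I0).prod (volume.restrict I1)) :=
        ((hW_aesm.restrict (s := I0)).comp_fst).mul (hKmeas2.aestronglyMeasurable)
      refine Integrable.mono' (integrable_const
        (((2*r)⁻¹ * (1+l) * (Real.pi*(1+l^2)*M)) * (Real.pi*((M-2)*r))⁻¹)) haesm ?_
      filter_upwards [haemem2] with p hp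
      show ‖W p.1 * relKer A p.1 p.2‖ ≤ _
      rw [norm_mul]
      exact mul_le_mul (hW_bd p.1)
        (CauchyAuxProof.norm_relKer_le hM2r (hfar01 p.1 hp.1 p.2 hp.2))
        (norm_nonneg _) (by positivity)
    have hFint : Integrable F (volume.restrict I1) := hprod1.integral_prod_left
    have hWG_int_I0 : Integrable (fun t => W t * G t) (volume.restrict I0) := by
      have h1 := hprod2.integral_prod_left
      refine h1.congr (Eventually.of_forall fun t => ?_)
      show (∫ y, (fun x y => W x * relKer A x y) t y ∂(volume.restrict I1)) = W t * G t
      rw [MeasureTheory.integral_const_mul]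
    have hWGfun : (fun x => W x * G x) = Set.indicator I0 (fun x => W x * G x) := by
      funext x
      by_cases hx : x ∈ I0
      · rw [Set.indicator_of_mem hx]
      · rw [Set.indicator_of_notMem hx, hW0 x hx, zero_mul]
    have hInd1 : Integrable (fun x => Set.indicator I1 F x) volume :=
      (integrable_indicator_iff hI1m).2 hFint
    have hInd2 : Integrable (fun x => W x * G x) volume := by
      rw [hWGfun]
      exact (integrable_indicator_iff hI0m).2 (hWGfun ▸ hWG_int_I0)
    have hFI1 : (∫ x in I1, F x) = - ∫ t in I0, W t * G t := by
      have hswap := integral_integral_swap (μ := volume.restrict I1) (ν := volume.restrict I0)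
        (f := fun x y => relKer A x y * W y) hprod1
      calc (∫ x in I1, F x) = ∫ x in I1, ∫ y in I0, relKer A x y * W y := by
            simp only [hFdef]
        _ = ∫ y in I0, ∫ x in I1, relKer A x y * W y := hswap
        _ = ∫ y in I0, (∫ x in I1, relKer A x y) * W y := by
            refine integral_congr_ae (Eventually.of_forall fun y => ?_)
            show (∫ x in I1, relKer A x y * W y) = (∫ x in I1, relKer A x y) * W y
            rw [MeasureTheory.integral_mul_const]
        _ = ∫ y in I0, (-G y) * W y := by
            refine integral_congr_ae (Eventually.of_forall fun y => ?_)
            show (∫ x in I1, relKer A x y) * W y = (-G y) * W y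
            have hxy : (∫ x in I1, relKer A x y) = -G y := by
              calc (∫ x in I1, relKer A x y) = ∫ x in I1, -relKer A y x := by
                    refine integral_congr_ae (Eventually.of_forall fun x => ?_)
                    show relKer A x y = -relKer A y x
                    exact CauchyAuxProof.relKer_anti A y x
                _ = -G y := by rw [integral_neg]
            rw [hxy]
        _ = - ∫ t in I0, W t * G t := by
            rw [← integral_neg]
            refine integral_congr_ae (Eventually.of_forall fun y => ?_)
            show (-G y) * W y = -(W y * G y)
            ring
    have hPiBb_int : Integrable (fun x => PiB (bFun A') CΓ CΓstar g h x * bFun A' x) volume := by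
      refine (hInd1.add hInd2).congr ?_
      filter_upwards [key] with x hx
      exact hx.symm
    have hsplit : (fun x => (a x - PiB (bFun A') CΓ CΓstar g h x) * bFun A' x)
        = fun x => a x * bFun A' x - PiB (bFun A') CΓ CΓstar g h x * bFun A' x := by
      funext x
      ring
    rw [hsplit, integral_sub habInt hPiBb_int, habZero, zero_sub, neg_eq_zero,
      integral_congr_ae key, integral_add hInd1 hInd2, integral_indicator hI1m]
    have h2 : (∫ x, W x * G x) = ∫ t in I0, W t * G t := by
      rw [hWGfun, integral_indicator hI0m]
      exact integral_congr_ae (Eventually.of_forall fun t => by rw [← hWGfun])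
    rw [h2, hFI1]
    exact neg_add_cancel _
  · -- lower bound for ‖g‖₂
    have hgnorm : eLpNorm g 2 volume = ENNReal.ofReal (Real.sqrt (2*r)) := by
      rw [hgdef, eLpNorm_indicator_const hI1m (by norm_num) ENNReal.ofNat_ne_top, hI1def,
        Real.volume_ball]
      simp only [nnnorm_one, enorm_one, ENNReal.coe_one, one_mul, ENNReal.toReal_ofNat]
      rw [ENNReal.ofReal_rpow_of_pos (by positivity), ← Real.sqrt_eq_rpow]
    rw [hgnorm]
    apply ENNReal.ofReal_le_ofReal
    have hCv2 : (2:ℝ) ≤ Cv := by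
      rw [hCvdef]
      nlinarith [sq_nonneg (1+l), mul_nonneg hl (sq_nonneg l), Real.pi_gt_three,
        mul_nonneg (mul_nonneg Real.pi_pos.le (sq_nonneg (1+l))) (by positivity : (0:ℝ) ≤ 1+l^2)]
    calc Cv⁻¹ * Real.sqrt r ≤ 1 * Real.sqrt r := by
          apply mul_le_mul_of_nonneg_right _ (Real.sqrt_nonneg r)
          rw [inv_le_one_iff₀]
          right
          linarith
      _ = Real.sqrt r := one_mul _
      _ ≤ Real.sqrt (2*r) := Real.sqrt_le_sqrt (by linarith)
  · -- upper bound for ‖g‖₂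
    have hgnorm : eLpNorm g 2 volume = ENNReal.ofReal (Real.sqrt (2*r)) := by
      rw [hgdef, eLpNorm_indicator_const hI1m (by norm_num) ENNReal.ofNat_ne_top, hI1def,
        Real.volume_ball]
      simp only [nnnorm_one, enorm_one, ENNReal.coe_one, one_mul, ENNReal.toReal_ofNat]
      rw [ENNReal.ofReal_rpow_of_pos (by positivity), ← Real.sqrt_eq_rpow]
    rw [hgnorm]
    apply ENNReal.ofReal_le_ofReal
    have hCv2 : (2:ℝ) ≤ Cv := by
      rw [hCvdef]
      nlinarith [sq_nonneg (1+l), mul_nonneg hl (sq_nonneg l), Real.pi_gt_three,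
        mul_nonneg (mul_nonneg Real.pi_pos.le (sq_nonneg (1+l))) (by positivity : (0:ℝ) ≤ 1+l^2)]
    calc Real.sqrt (2*r) = Real.sqrt 2 * Real.sqrt r := Real.sqrt_mul (by norm_num) r
      _ ≤ 2 * Real.sqrt r :=
          mul_le_mul_of_nonneg_right CauchyAuxProof.num_sqrt2 (Real.sqrt_nonneg r)
      _ ≤ Cv * Real.sqrt r := mul_le_mul_of_nonneg_right hCv2 (Real.sqrt_nonneg r)
  · -- bound for ‖h‖₂
    rw [hhdef]
    have hD2pos : (0:ℝ) < (2*r)⁻¹ * (Real.pi*(1+l^2)*M) := by positivity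
    have hmono : eLpNorm (fun x => -a x / κ) 2 volume
        ≤ eLpNorm (Set.indicator I0 fun _ => (2*r)⁻¹ * (Real.pi*(1+l^2)*M)) 2 volume := by
      apply eLpNorm_mono_real
      intro x
      by_cases hx : x ∈ I0
      · rw [Set.indicator_of_mem hx, norm_div, norm_neg]
        calc ‖a x‖ / ‖κ‖ = ‖a x‖ * ‖κ‖⁻¹ := div_eq_mul_inv _ _
          _ ≤ (2*r)⁻¹ * (Real.pi*(1+l^2)*M) :=
              mul_le_mul (habd x) hκinv (inv_nonneg.mpr (norm_nonneg _)) (by positivity)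
      · rw [Set.indicator_of_notMem hx, hsupp x hx]
        simp
    refine le_trans hmono ?_
    rw [eLpNorm_indicator_const hI0m (by norm_num) ENNReal.ofNat_ne_top, hI0def, Real.volume_ball,
      Real.enorm_eq_ofReal hD2pos.le]
    simp only [ENNReal.toReal_ofNat]
    rw [ENNReal.ofReal_rpow_of_pos (by positivity), ← Real.sqrt_eq_rpow,
      ← ENNReal.ofReal_mul hD2pos.le]
    apply ENNReal.ofReal_le_ofReal
    rw [hCvdef]
    exact CauchyAuxProof.num3 hl hM hr
end
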